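/- arXiv:1901.05996 — 10 statements merged into one kernel-verified Lean document; each statement's English description precedes it below -/
import Mathlib

section
/- For every real ρ > 0, the function ‖t‖_ρ := ((1 + ρ)/ρ)·|log(1 + ρ·t)| is a group norm on the Popa group G_ρ; that is, for all s, t ∈ G_ρ: (i) ‖t‖_ρ = 0 if and only if t = 0; (ii) ‖s ∘_ρ t‖_ρ ≤ ‖s‖_ρ + ‖t‖_ρ; and (iii) ‖−t/(1 + ρ·t)‖_ρ = ‖t‖_ρ, where −t/(1 + ρ·t) is the inverse of t in G_ρ. -/
/-- For `ρ > 0`, `‖t‖_ρ := ((1+ρ)/ρ)·|log(1+ρ·t)|` is a group norm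
on the Popa group `G_ρ`: it vanishes exactly at the identity `0`, is subadditive
with respect to `∘_ρ`, and is invariant under the group inverse `-t/(1+ρ·t)`. -/
theorem popa_group_norm (ρ : ℝ) (hρ : 0 < ρ)
    (N : ℝ → ℝ) (hN : ∀ t, N t = ((1 + ρ) / ρ) * |Real.log (1 + ρ * t)|) :
    ∀ s t : ℝ, 0 < 1 + ρ * s → 0 < 1 + ρ * t →
      ((N t = 0 ↔ t = 0) ∧
       N (s + t + ρ * s * t) ≤ N s + N t ∧
       N (-t / (1 + ρ * t)) = N t) := by
  intro s t hs ht
  have hc : 0 < (1 + ρ) / ρ := by positivity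
  refine ⟨?_, ?_, ?_⟩
  · rw [hN]
    constructor
    · intro h
      have h1 : |Real.log (1 + ρ * t)| = 0 := by
        rcases mul_eq_zero.mp h with h | h
        · exact absurd h (ne_of_gt hc)
        · exact h
      have h2 : Real.log (1 + ρ * t) = 0 := abs_eq_zero.mp h1
      have h3 : (1 : ℝ) + ρ * t = 1 := by
        have := Real.exp_log ht
        rw [h2, Real.exp_zero] at this
        linarith
      have : ρ * t = 0 := by linarith
      rcases mul_eq_zero.mp this with h | h
      · exact absurd h (ne_of_gt hρ)
      · exact h
    · intro h; simp [h]
  · rw [hN, hN, hN]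
    have key : (1 : ℝ) + ρ * (s + t + ρ * s * t) = (1 + ρ * s) * (1 + ρ * t) := by ring
    rw [key, Real.log_mul (ne_of_gt hs) (ne_of_gt ht), ← mul_add]
    exact mul_le_mul_of_nonneg_left (abs_add_le _ _) (le_of_lt hc)
  · rw [hN, hN]
    have key : (1 : ℝ) + ρ * (-t / (1 + ρ * t)) = (1 + ρ * t)⁻¹ := by
      field_simp
      ring
    rw [key, Real.log_inv, abs_neg]
end

section
/- Let φ : (0, ∞) → (0, ∞) satisfy φ(x) = O(x) as x → ∞, and suppose that for each t ≥ 0 the ratio η_x(t) := φ(x + t·φ(x))/φ(x) converges as x → ∞ to a limit η(t), the convergence being locally uniform in t on [0, ∞). Then η satisfies the Gołąb–Schinzel functional equation: η(s + η(s)·t) = η(s)·η(t) for all s, t ≥ 0. -/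
open Filter Topology

namespace GSaux


noncomputable def E (φ : ℝ → ℝ) (x t : ℝ) : ℝ := φ (x + t * φ x) / φ x

variable {φ η : ℝ → ℝ}

lemma epos (hφpos : ∀ x > (0 : ℝ), 0 < φ x) {x t : ℝ} (hx : 0 < x) (ht : 0 ≤ t) :
    0 < E φ x t := by
  have hφx := hφpos x hx
  have harg : 0 < x + t * φ x := by positivity
  exact div_pos (hφpos _ harg) hφx

lemma ekey (hφpos : ∀ x > (0 : ℝ), 0 < φ x) {x p : ℝ} (r : ℝ) (hx : 0 < x) (hp : 0 ≤ p) :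
    E φ x (p + r * E φ x p) = E φ x p * E φ (x + p * φ x) r := by
  have hφx := hφpos x hx
  have hP : (0:ℝ) < x + p * φ x := by positivity
  have hφP := hφpos _ hP
  unfold E
  rw [show x + (p + r * (φ (x + p * φ x) / φ x)) * φ x
      = (x + p * φ x) + r * φ (x + p * φ x) by field_simp; ring]
  field_simp

lemma hbase (hφpos : ∀ x > (0 : ℝ), 0 < φ x) {s : ℝ} (hs : 0 ≤ s) :
    Tendsto (fun x => x + s * φ x) atTop atTop := by
  apply tendsto_atTop_mono' atTop (f₁ := id)
  · filter_upwards [eventually_gt_atTop (0:ℝ)] with x hx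
    have := hφpos x hx
    simp only [id]
    nlinarith
  · exact tendsto_id

lemma hpt (hconv : ∀ K : Set ℝ, K ⊆ Set.Ici 0 → IsCompact K →
      TendstoUniformlyOn (fun x t => φ (x + t * φ x) / φ x) η atTop K)
    {t : ℝ} (ht : 0 ≤ t) :
    Tendsto (fun x => E φ x t) atTop (𝓝 (η t)) := by
  have h := hconv {t} (by simpa using ht) isCompact_singleton
  exact h.tendsto_at rfl

lemma eta_nonneg (hφpos : ∀ x > (0 : ℝ), 0 < φ x)
    (hconv : ∀ K : Set ℝ, K ⊆ Set.Ici 0 → IsCompact K →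
      TendstoUniformlyOn (fun x t => φ (x + t * φ x) / φ x) η atTop K)
    {t : ℝ} (ht : 0 ≤ t) : 0 ≤ η t := by
  refine ge_of_tendsto (hpt hconv ht) ?_
  filter_upwards [eventually_gt_atTop (0:ℝ)] with x hx
  exact (epos hφpos hx ht).le

lemma eta_zero (hφpos : ∀ x > (0 : ℝ), 0 < φ x)
    (hconv : ∀ K : Set ℝ, K ⊆ Set.Ici 0 → IsCompact K →
      TendstoUniformlyOn (fun x t => φ (x + t * φ x) / φ x) η atTop K) :
    η 0 = 1 := by
  have h1 : Tendsto (fun x : ℝ => E φ x 0) atTop (𝓝 (η 0)) := hpt hconv le_rfl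
  have h2 : Tendsto (fun x : ℝ => E φ x 0) atTop (𝓝 1) := by
    apply Tendsto.congr' _ tendsto_const_nhds
    filter_upwards [eventually_gt_atTop (0:ℝ)] with x hx
    have hφx := (hφpos x hx).ne'
    unfold E
    rw [zero_mul, add_zero, div_self hφx]
  exact tendsto_nhds_unique h1 h2





lemma hC (hφpos : ∀ x > (0 : ℝ), 0 < φ x) (hO : ∃ C X : ℝ, ∀ x ≥ X, φ x ≤ C * x) :
    ∃ C X₀ : ℝ, 0 < C ∧ 1 ≤ X₀ ∧ ∀ x ≥ X₀, φ x ≤ C * x := by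
  obtain ⟨C, X, hCX⟩ := hO
  refine ⟨C, max X 1, ?_, le_max_right _ _, fun x hx => hCX x (le_trans (le_max_left _ _) hx)⟩
  have h1 : (1:ℝ) ≤ max X 1 := le_max_right _ _
  have h0 : (0:ℝ) < max X 1 := lt_of_lt_of_le one_pos h1
  have := hCX (max X 1) (le_max_left _ _)
  have hφ := hφpos _ h0
  nlinarith

/-- uniform upper bound for `E z r` for `r ∈ [0,1]`, `z` large -/
lemma M1bound (hφpos : ∀ x > (0 : ℝ), 0 < φ x) (hO : ∃ C X : ℝ, ∀ x ≥ X, φ x ≤ C * x)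
    (hconv : ∀ K : Set ℝ, K ⊆ Set.Ici 0 → IsCompact K →
      TendstoUniformlyOn (fun x t => φ (x + t * φ x) / φ x) η atTop K) :
    ∃ M X₄ : ℝ, 0 < M ∧ 1 ≤ X₄ ∧ ∀ z ≥ X₄, ∀ r, 0 ≤ r → r ≤ 1 → E φ z r ≤ M := by
  obtain ⟨C, X₀, hCpos, hX₀, hCX⟩ := hC hφpos hO
  have huc := (Metric.tendstoUniformlyOn_iff.1
    (hconv (Set.Icc 0 1) (fun x hx => hx.1) isCompact_Icc)) 1 one_pos
  obtain ⟨X₄', hX₄'⟩ := eventually_atTop.1 huc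
  set z₄ : ℝ := max X₄' X₀ with hz₄
  have hz₄X₀ : X₀ ≤ z₄ := le_max_right _ _
  have hz₄1 : (1:ℝ) ≤ z₄ := le_trans hX₀ hz₄X₀
  have hz₄0 : (0:ℝ) < z₄ := lt_of_lt_of_le one_pos hz₄1
  have hφz₄ := hφpos _ hz₄0
  -- η is bounded on [0,1]
  have hηbd : ∀ r, 0 ≤ r → r ≤ 1 → η r ≤ C * (z₄ + φ z₄) / φ z₄ + 1 := by
    intro r hr0 hr1
    have h1 := hX₄' z₄ (le_max_left _ _) r ⟨hr0, hr1⟩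
    rw [Real.dist_eq] at h1
    have h2 : η r ≤ φ (z₄ + r * φ z₄) / φ z₄ + 1 := by
      have := abs_lt.1 h1
      linarith [this.1, this.2]
    have harg0 : 0 < z₄ + r * φ z₄ := by positivity
    have harg : z₄ + r * φ z₄ ≥ X₀ := by nlinarith
    have h3 : φ (z₄ + r * φ z₄) ≤ C * (z₄ + φ z₄) := by
      have h4 := hCX _ harg
      nlinarith [mul_le_mul_of_nonneg_left (mul_le_of_le_one_left hφz₄.le hr1) hCpos.le]
    calc η r ≤ φ (z₄ + r * φ z₄) / φ z₄ + 1 := h2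
      _ ≤ C * (z₄ + φ z₄) / φ z₄ + 1 := by gcongr
  refine ⟨C * (z₄ + φ z₄) / φ z₄ + 2, z₄, ?_, hz₄1, ?_⟩
  · have : 0 < C * (z₄ + φ z₄) / φ z₄ := by positivity
    linarith
  · intro z hz r hr0 hr1
    have h1 := hX₄' z (le_trans (le_max_left _ _) hz) r ⟨hr0, hr1⟩
    rw [Real.dist_eq] at h1
    have h2 := abs_lt.1 h1
    have := hηbd r hr0 hr1
    unfold E
    linarith [h2.1, h2.2]





lemma hpt' (hconv : ∀ K : Set ℝ, K ⊆ Set.Ici 0 → IsCompact K →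
      TendstoUniformlyOn (fun x t => φ (x + t * φ x) / φ x) η atTop K)
    {t : ℝ} (ht : 0 ≤ t) :
    Tendsto (fun x => E φ x t) atTop (𝓝 (η t)) :=
  (hconv {t} (by simpa using ht) isCompact_singleton).tendsto_at rfl

lemma P1up (hφpos : ∀ x > (0 : ℝ), 0 < φ x) (hO : ∃ C X : ℝ, ∀ x ≥ X, φ x ≤ C * x)
    (hconv : ∀ K : Set ℝ, K ⊆ Set.Ici 0 → IsCompact K →
      TendstoUniformlyOn (fun x t => φ (x + t * φ x) / φ x) η atTop K) :
    ∀ δ : ℝ, 0 < δ → ∃ r₀ > 0, ∀ r, 0 < r → r ≤ r₀ → η r ≤ 1 + δ := by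
  intro δ hδ
  obtain ⟨C, X₀, hCpos, hX₀1, hCX⟩ := hC hφpos hO
  refine ⟨δ / (2 * C), by positivity, ?_⟩
  intro r hr0 hrr
  by_contra hcon
  push_neg at hcon
  have hev : ∀ᶠ z in atTop, 1 + δ < E φ z r :=
    (hpt' hconv hr0.le).eventually (eventually_gt_nhds hcon)
  obtain ⟨X₃, hX₃⟩ := eventually_atTop.1 hev
  set z₀ : ℝ := max X₀ X₃ with hz₀def
  have hz₀X₀ : X₀ ≤ z₀ := le_max_left _ _
  have hz₀1 : (1:ℝ) ≤ z₀ := le_trans hX₀1 hz₀X₀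
  set z : ℕ → ℝ := fun k => Nat.rec z₀ (fun _ w => w + r * φ w) k with hzdef
  have hzsucc : ∀ k, z (k + 1) = z k + r * φ (z k) := fun k => rfl
  have hge : ∀ k, z₀ ≤ z k := by
    intro k
    induction k with
    | zero => exact le_rfl
    | succ k ih =>
      have hzk0 : 0 < z k := lt_of_lt_of_le (lt_of_lt_of_le one_pos hz₀1) ih
      have := hφpos _ hzk0
      rw [hzsucc]
      nlinarith
  have hzpos : ∀ k, 0 < z k := fun k => lt_of_lt_of_le (lt_of_lt_of_le one_pos hz₀1) (hge k)
  have hφgrow : ∀ k, (1 + δ) ^ k * φ z₀ ≤ φ (z k) := by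
    intro k
    induction k with
    | zero => rw [pow_zero, one_mul]; exact le_rfl
    | succ k ih =>
      have h1 := hX₃ (z k) (le_trans (le_max_right _ _) (hge k))
      have hφzk := hφpos _ (hzpos k)
      have h2 : (1 + δ) * φ (z k) < φ (z k + r * φ (z k)) := by
        have := (lt_div_iff₀ hφzk).1 h1
        unfold E at this
        linarith [this]
      rw [hzsucc, pow_succ]
      nlinarith [pow_pos (show (0:ℝ) < 1 + δ by linarith) k, hφpos _ (hzpos k)]
  have hzub : ∀ k, z k ≤ z₀ * (1 + r * C) ^ k := by
    intro k
    induction k with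
    | zero => rw [pow_zero, mul_one]; exact le_rfl
    | succ k ih =>
      have hφzk := hCX (z k) (le_trans hz₀X₀ (hge k))
      rw [hzsucc, pow_succ]
      have h1 : z k + r * φ (z k) ≤ z k * (1 + r * C) := by nlinarith
      have h2 : (0:ℝ) < 1 + r * C := by positivity
      nlinarith
  have hrC : 1 + r * C ≤ 1 + δ / 2 := by
    have : r * C ≤ δ / 2 := by
      rw [show δ / 2 = δ / (2 * C) * C by field_simp]
      exact mul_le_mul_of_nonneg_right hrr hCpos.le
    linarith
  have hφz₀ := hφpos _ (lt_of_lt_of_le one_pos hz₀1)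
  obtain ⟨n, hn⟩ := pow_unbounded_of_one_lt (C * z₀ / φ z₀)
    (show 1 < (1 + δ) / (1 + δ / 2) by rw [lt_div_iff₀ (by linarith)]; linarith)
  have hA : (0:ℝ) < (1 + δ / 2) ^ n := by positivity
  rw [div_pow, div_lt_div_iff₀ hφz₀ hA] at hn
  have hchain : φ (z n) ≤ C * z₀ * (1 + δ / 2) ^ n := by
    have h1 := hCX (z n) (le_trans hz₀X₀ (hge n))
    have h2 : z₀ * (1 + r * C) ^ n ≤ z₀ * (1 + δ / 2) ^ n := by
      have := pow_le_pow_left₀ (by positivity) hrC n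
      nlinarith [hzpos 0, lt_of_lt_of_le one_pos hz₀1]
    nlinarith [hzub n, hzpos n]
  nlinarith [hφgrow n]

lemma P1low (hφpos : ∀ x > (0 : ℝ), 0 < φ x) (hO : ∃ C X : ℝ, ∀ x ≥ X, φ x ≤ C * x)
    (hconv : ∀ K : Set ℝ, K ⊆ Set.Ici 0 → IsCompact K →
      TendstoUniformlyOn (fun x t => φ (x + t * φ x) / φ x) η atTop K) :
    ∀ δ : ℝ, 0 < δ → δ < 1 → ∀ r, 0 < r → r ≤ δ / 4 → 1 - δ ≤ η r := by
  intro δ hδ0 hδ1 r hr0 hrr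
  by_contra hcon
  push_neg at hcon
  obtain ⟨M, X₄, hM0, hX₄1, hMbd⟩ := M1bound hφpos hO hconv
  have hev : ∀ᶠ z in atTop, E φ z r < 1 - δ :=
    (hpt' hconv hr0.le).eventually (eventually_lt_nhds hcon)
  obtain ⟨X₃, hX₃⟩ := eventually_atTop.1 hev
  set q : ℝ := 1 - δ with hqdef
  have hq0 : 0 < q := by simp [hqdef]; linarith
  have hq1 : q < 1 := by simp [hqdef]; linarith
  set z₀ : ℝ := max X₃ X₄ with hz₀def
  have hz₀1 : (1:ℝ) ≤ z₀ := le_trans hX₄1 (le_max_right _ _)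
  set z : ℕ → ℝ := fun k => Nat.rec z₀ (fun _ w => w + r * φ w) k with hzdef
  have hzsucc : ∀ k, z (k + 1) = z k + r * φ (z k) := fun k => rfl
  have hge : ∀ k, z₀ ≤ z k := by
    intro k
    induction k with
    | zero => exact le_rfl
    | succ k ih =>
      have hzk0 : 0 < z k := lt_of_lt_of_le (lt_of_lt_of_le one_pos hz₀1) ih
      have := hφpos _ hzk0
      rw [hzsucc]; nlinarith
  have hzpos : ∀ k, 0 < z k := fun k => lt_of_lt_of_le (lt_of_lt_of_le one_pos hz₀1) (hge k)
  have hstep : ∀ k, φ (z (k + 1)) ≤ q * φ (z k) := by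
    intro k
    have h1 := hX₃ (z k) (le_trans (le_max_left _ _) (hge k))
    have hφzk := hφpos _ (hzpos k)
    have := (div_lt_iff₀ hφzk).1 h1
    unfold E at this
    rw [hzsucc]
    unfold E at h1
    nlinarith [(div_lt_iff₀ hφzk).1 h1]
  have hdecay : ∀ k j, φ (z (k + j)) ≤ q ^ j * φ (z k) := by
    intro k j
    induction j with
    | zero => simpa using le_rfl
    | succ j ih =>
      have := hstep (k + j)
      rw [show k + (j+1) = (k + j) + 1 by ring, pow_succ]
      nlinarith [hφpos _ (hzpos (k+j))]
  have hreach : ∀ k j, z (k + j) ≤ z k + r / δ * (1 - q ^ j) * φ (z k) := by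
    intro k j
    induction j with
    | zero => simpa using le_rfl
    | succ j ih =>
      have h1 := hdecay k j
      have hφzk := hφpos _ (hzpos k)
      rw [show k + (j+1) = (k + j) + 1 by ring, hzsucc]
      have h2 : r * φ (z (k + j)) ≤ r * (q ^ j * φ (z k)) :=
        mul_le_mul_of_nonneg_left h1 hr0.le
      have h3 : r / δ * (1 - q ^ (j+1)) = r / δ * (1 - q ^ j) + r * q ^ j / δ * (1 - q) := by
        field_simp; ring
      have h4 : r * q ^ j / δ * (1 - q) = r * q ^ j := by
        rw [hqdef]; field_simp; ring
      nlinarith [pow_pos hq0 j]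
  have hmono : Monotone z := by
    apply monotone_nat_of_le_succ
    intro k
    rw [hzsucc]
    nlinarith [hφpos _ (hzpos k), hr0]
  have hbdd : ∀ j, z j ≤ z₀ + r / δ * φ z₀ := by
    intro j
    have := hreach 0 j
    have hφz₀ := hφpos _ (hzpos 0)
    have hq : (0:ℝ) < q ^ j := pow_pos hq0 j
    have : z (0 + j) ≤ z 0 + r / δ * (1 - q ^ j) * φ (z 0) := this
    simp only [Nat.zero_add] at this
    have h5 : r / δ * (1 - q ^ j) * φ (z 0) ≤ r / δ * φ (z 0) := by
      have hrδ : 0 ≤ r / δ := by positivity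
      have h6 : r / δ * (1 - q ^ j) ≤ r / δ := by nlinarith
      exact mul_le_mul_of_nonneg_right h6 hφz₀.le
    calc z j ≤ z 0 + r / δ * (1 - q ^ j) * φ (z 0) := this
      _ ≤ z 0 + r / δ * φ (z 0) := by linarith
  set Z : ℝ := sSup (Set.range z) with hZdef
  have hne : (Set.range z).Nonempty := ⟨z 0, ⟨0, rfl⟩⟩
  have hbddZ : BddAbove (Set.range z) := ⟨z₀ + r / δ * φ z₀, by rintro w ⟨j, rfl⟩; exact hbdd j⟩
  have hZub : ∀ k, z k ≤ Z := fun k => le_csSup hbddZ ⟨k, rfl⟩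
  have hZle : ∀ k, Z ≤ z k + r / δ * φ (z k) := by
    intro k
    apply csSup_le hne
    rintro w ⟨j, rfl⟩
    rcases le_total j k with hjk | hjk
    · have h7 : z j ≤ z k := hmono hjk
      have hφzk := hφpos _ (hzpos k)
      have h8 : 0 ≤ r / δ * φ (z k) := by positivity
      linarith
    · obtain ⟨m, rfl⟩ := Nat.exists_eq_add_of_le hjk
      have h7 := hreach k m
      have hφzk := hφpos _ (hzpos k)
      have hq : (0:ℝ) < q ^ m := pow_pos hq0 m
      have hrδ : 0 ≤ r / δ := by positivity
      have h6 : r / δ * (1 - q ^ m) ≤ r / δ := by nlinarith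
      have h8 := mul_le_mul_of_nonneg_right h6 hφzk.le
      linarith
  have hZpos : 0 < Z := lt_of_lt_of_le (lt_of_lt_of_le one_pos hz₀1) (le_trans (hge 0) (hZub 0))
  have hφZ := hφpos _ hZpos
  -- for each k, express Z = z k + r_k φ(z k) with r_k ∈ (0,1]
  have hkey : ∀ k, φ Z ≤ M * φ (z k) := by
    intro k
    have hφzk := hφpos _ (hzpos k)
    set rk : ℝ := (Z - z k) / φ (z k) with hrkdef
    have hrk0 : 0 < rk := by
      apply div_pos _ hφzk
      have := hZub (k+1)
      rw [hzsucc] at this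
      nlinarith
    have hrk1 : rk ≤ 1 := by
      rw [hrkdef, div_le_one hφzk]
      have := hZle k
      have hrδ : r / δ ≤ 1 := by
        rw [div_le_one hδ0]; linarith
      nlinarith
    have hid : z k + rk * φ (z k) = Z := by
      rw [hrkdef]; field_simp; ring
    have := hMbd (z k) (le_trans (le_max_right _ _) (hge k)) rk hrk0.le hrk1
    unfold E at this
    rw [hid] at this
    calc φ Z = φ Z / φ (z k) * φ (z k) := by field_simp
      _ ≤ M * φ (z k) := by nlinarith
  have hφz₀' : 0 < φ z₀ := hφpos _ (lt_of_lt_of_le one_pos hz₀1)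
  obtain ⟨n, hn⟩ := exists_pow_lt_of_lt_one (div_pos hφZ (mul_pos hM0 hφz₀')) hq1
  have h1 := hkey n
  have h2 : φ (z n) ≤ q ^ n * φ z₀ := by
    have := hdecay 0 n
    exact (by simpa using this : φ (z n) ≤ q ^ n * φ (z 0))
  rw [lt_div_iff₀ (mul_pos hM0 hφz₀')] at hn
  nlinarith


/-- Local lemma: uniformly for large base and small relative step, `E` is near 1. -/
lemma L1 (hφpos : ∀ x > (0 : ℝ), 0 < φ x) (hO : ∃ C X : ℝ, ∀ x ≥ X, φ x ≤ C * x)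
    (hconv : ∀ K : Set ℝ, K ⊆ Set.Ici 0 → IsCompact K →
      TendstoUniformlyOn (fun x t => φ (x + t * φ x) / φ x) η atTop K) :
    ∀ δ : ℝ, 0 < δ → ∃ r₁ X₂ : ℝ, 0 < r₁ ∧ r₁ ≤ 1 ∧
      ∀ z ≥ X₂, ∀ ρ, 0 ≤ ρ → ρ ≤ r₁ → |E φ z ρ - 1| ≤ δ := by
  intro δ hδ
  set δ' : ℝ := min δ (1/2) with hδ'def
  have hδ'0 : 0 < δ' := lt_min hδ (by norm_num)
  have hδ'δ : δ' ≤ δ := min_le_left _ _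
  have hδ'h : δ' ≤ 1/2 := min_le_right _ _
  obtain ⟨r₀, hr₀0, hr₀⟩ := P1up hφpos hO hconv (δ'/2) (by linarith)
  set r₁ : ℝ := min (min r₀ (δ'/8)) 1 with hr₁def
  have hr₁0 : 0 < r₁ := lt_min (lt_min hr₀0 (by linarith)) one_pos
  have hr₁1 : r₁ ≤ 1 := min_le_right _ _
  have hηpt : ∀ ρ, 0 ≤ ρ → ρ ≤ r₁ → |η ρ - 1| ≤ δ'/2 := by
    intro ρ hρ0 hρr
    rcases eq_or_lt_of_le hρ0 with h | h
    · rw [← h, eta_zero hφpos hconv]; simp; linarith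
    · have h1 : η ρ ≤ 1 + δ'/2 :=
        hr₀ ρ h (le_trans hρr (le_trans (min_le_left _ _) (min_le_left _ _)))
      have h2 : 1 - δ'/2 ≤ η ρ := by
        apply P1low hφpos hO hconv (δ'/2) (by linarith) (by linarith) ρ h
        have := le_trans hρr (le_trans (min_le_left _ _) (min_le_right _ _))
        linarith
      rw [abs_le]; constructor <;> linarith
  have huc := (Metric.tendstoUniformlyOn_iff.1
    (hconv (Set.Icc 0 1) (fun x hx => hx.1) isCompact_Icc)) (δ'/2) (by linarith)
  obtain ⟨X₂, hX₂⟩ := eventually_atTop.1 huc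
  refine ⟨r₁, X₂, hr₁0, hr₁1, ?_⟩
  intro z hz ρ hρ0 hρr
  have h1 := hX₂ z hz ρ ⟨hρ0, le_trans hρr hr₁1⟩
  rw [Real.dist_eq] at h1
  have h2 := hηpt ρ hρ0 hρr
  have h3 : |E φ z ρ - 1| ≤ |η ρ - E φ z ρ| + |η ρ - 1| := by
    have := abs_sub_abs_le_abs_sub (E φ z ρ - 1) (η ρ - 1)
    calc |E φ z ρ - 1| = |(η ρ - 1) - (η ρ - E φ z ρ)| := by ring_nf
      _ ≤ |η ρ - 1| + |η ρ - E φ z ρ| := abs_sub _ _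
      _ = |η ρ - E φ z ρ| + |η ρ - 1| := by ring
  have h1' : |η ρ - E φ z ρ| < δ' / 2 := h1
  linarith

/-- Claim Z : control of η just right of a positivity point. -/
lemma CZ (hφpos : ∀ x > (0 : ℝ), 0 < φ x) (hO : ∃ C X : ℝ, ∀ x ≥ X, φ x ≤ C * x)
    (hconv : ∀ K : Set ℝ, K ⊆ Set.Ici 0 → IsCompact K →
      TendstoUniformlyOn (fun x t => φ (x + t * φ x) / φ x) η atTop K)
    {r₁ X₂ : ℝ} (hr₁0 : 0 < r₁)
    (hL : ∀ z ≥ X₂, ∀ ρ, 0 ≤ ρ → ρ ≤ r₁ → |E φ z ρ - 1| ≤ 1/2)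
    {p q : ℝ} (hp : 0 ≤ p) (hηp : 0 < η p) (hq0 : 0 < q) (hq : q ≤ r₁ * η p / 2) :
    1/2 * η p ≤ η (p + q) := by
  have hEp := hpt' hconv hp
  have hEpq := hpt' hconv (by linarith : (0:ℝ) ≤ p + q)
  have hkey : ∀ᶠ x in atTop, 0 ≤ E φ x (p + q) - 1/2 * E φ x p := by
    have hev1 : ∀ᶠ x in atTop, η p / 2 < E φ x p :=
      hEp.eventually (eventually_gt_nhds (by linarith))
    filter_upwards [hev1, eventually_ge_atTop (max 1 X₂)] with x hx1 hx2
    have hx1' : (1:ℝ) ≤ x := le_trans (le_max_left _ _) hx2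
    have hx0 : (0:ℝ) < x := lt_of_lt_of_le one_pos hx1'
    have hφx := hφpos x hx0
    have hExp : 0 < E φ x p := epos hφpos hx0 hp
    set ρ : ℝ := q / E φ x p with hρdef
    have hρ0 : 0 < ρ := div_pos hq0 hExp
    have hρr : ρ ≤ r₁ := by
      rw [hρdef, div_le_iff₀ hExp]
      have h6 : q ≤ r₁ * (η p / 2) := by linarith
      have : r₁ * (η p / 2) ≤ r₁ * E φ x p := by
        apply mul_le_mul_of_nonneg_left hx1.le hr₁0.le
      linarith
    have hbase : X₂ ≤ x + p * φ x := by
      have h5 : X₂ ≤ x := le_trans (le_max_right _ _) hx2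
      nlinarith [mul_nonneg hp hφx.le]
    have h7 := hL _ hbase ρ hρ0.le hρr
    have h8 : 1/2 ≤ E φ (x + p * φ x) ρ := by
      have := abs_le.1 h7
      linarith [this.1]
    have h9 : E φ x (p + q) = E φ x p * E φ (x + p * φ x) ρ := by
      have := ekey hφpos (φ := φ) ρ hx0 hp
      rw [hρdef] at this ⊢
      rw [show p + q / E φ x p * E φ x p = p + q by field_simp] at this
      exact this
    rw [h9]
    nlinarith
  have hlim : Tendsto (fun x => E φ x (p + q) - 1/2 * E φ x p) atTop
      (𝓝 (η (p + q) - 1/2 * η p)) := hEpq.sub (hEp.const_mul _)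
  have := ge_of_tendsto hlim hkey
  linarith

/-- Window lemma : a sequence of good values just right of u gives a lower bound on an interval. -/
lemma WL (hφpos : ∀ x > (0 : ℝ), 0 < φ x) (hO : ∃ C X : ℝ, ∀ x ≥ X, φ x ≤ C * x)
    (hconv : ∀ K : Set ℝ, K ⊆ Set.Ici 0 → IsCompact K →
      TendstoUniformlyOn (fun x t => φ (x + t * φ x) / φ x) η atTop K)
    {u c₀ : ℝ} (hu : 0 ≤ u) (hc₀ : 0 < c₀) (v : ℝ → ℝ)
    (hv1 : ∀ᶠ x in atTop, u < v x) (hv2 : Tendsto v atTop (𝓝 u))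
    (hv3 : ∀ᶠ x in atTop, c₀ ≤ η (v x)) :
    ∃ w > 0, ∀ p', u < p' → p' < u + w → c₀ / 2 ≤ η p' := by
  obtain ⟨r₁, X₂, hr₁0, hr₁1, hL⟩ := L1 hφpos hO hconv (1/2) (by norm_num)
  refine ⟨r₁ * c₀ / 4, by positivity, ?_⟩
  intro p' hp'1 hp'2
  have hev : ∀ᶠ x in atTop, v x < p' := by
    have := hv2.eventually (eventually_lt_nhds hp'1)
    exact this
  obtain ⟨x, hx1, hx2, hx3⟩ := (hv1.and (hev.and hv3)).exists
  have hq0 : 0 < p' - v x := by linarith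
  have hvx0 : 0 ≤ v x := le_trans hu hx1.le
  have hηvx : 0 < η (v x) := lt_of_lt_of_le hc₀ hx3
  have hq : p' - v x ≤ r₁ * η (v x) / 2 := by
    have h1 : p' - v x < r₁ * c₀ / 4 := by linarith
    have h2 : r₁ * c₀ / 4 ≤ r₁ * η (v x) / 2 := by nlinarith
    linarith
  have := CZ hφpos hO hconv hr₁0 hL hvx0 hηvx hq0 hq
  rw [show v x + (p' - v x) = p' by ring] at this
  nlinarith

/-- No recovery after collapse: if `E (Y x) u → 0` but `η ≥ c` on `(u, u+w)`, contradiction. -/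
lemma CRASH (hφpos : ∀ x > (0 : ℝ), 0 < φ x) (hO : ∃ C X : ℝ, ∀ x ≥ X, φ x ≤ C * x)
    (hconv : ∀ K : Set ℝ, K ⊆ Set.Ici 0 → IsCompact K →
      TendstoUniformlyOn (fun x t => φ (x + t * φ x) / φ x) η atTop K)
    {u c w : ℝ} (hu : 0 ≤ u) (hc : 0 < c) (hw : 0 < w)
    (hlow : ∀ v, u < v → v < u + w → c ≤ η v)
    (Y : ℝ → ℝ) (hY : Tendsto Y atTop atTop)
    (hcol : Tendsto (fun x => E φ (Y x) u) atTop (𝓝 0)) : False := by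
  obtain ⟨r₁, X₂, hr₁0, hr₁1, hL⟩ := L1 hφpos hO hconv (1/2) (by norm_num)
  have huc := (Metric.tendstoUniformlyOn_iff.1
    (hconv (Set.Icc 0 (u+1)) (fun x hx => hx.1) isCompact_Icc)) (c/4) (by positivity)
  have hucY : ∀ᶠ x in atTop, ∀ ρ ∈ Set.Icc (0:ℝ) (u+1),
      dist (η ρ) (φ (Y x + ρ * φ (Y x)) / φ (Y x)) < c/4 := hY.eventually huc
  set m : ℝ := min (min (w/(2*r₁)) (1/r₁)) (c/2) with hmdef
  have hm0 : 0 < m := by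
    apply lt_min (lt_min _ _) <;> positivity
  have hsmall : ∀ᶠ x in atTop, E φ (Y x) u < m :=
    hcol.eventually (eventually_lt_nhds hm0)
  have hY1 : ∀ᶠ x in atTop, max 1 X₂ ≤ Y x := hY.eventually (eventually_ge_atTop _)
  obtain ⟨x, hd, hs, h1⟩ := (hucY.and (hsmall.and hY1)).exists
  have hYx1 : (1:ℝ) ≤ Y x := le_trans (le_max_left _ _) h1
  have hYx0 : (0:ℝ) < Y x := lt_of_lt_of_le one_pos hYx1
  have hφY := hφpos _ hYx0
  have he : 0 < E φ (Y x) u := epos hφpos hYx0 hu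
  set e : ℝ := E φ (Y x) u with hedef
  have hew : e < w/(2*r₁) := lt_of_lt_of_le hs (le_trans (min_le_left _ _) (min_le_left _ _))
  have he1 : e < 1/r₁ := lt_of_lt_of_le hs (le_trans (min_le_left _ _) (min_le_right _ _))
  have hec : e < c/2 := lt_of_lt_of_le hs (min_le_right _ _)
  have hid : E φ (Y x) (u + r₁ * E φ (Y x) u) = E φ (Y x) u * E φ (Y x + u * φ (Y x)) r₁ :=
    ekey hφpos r₁ hYx0 hu
  have hbase : X₂ ≤ Y x + u * φ (Y x) := by
    have h5 : X₂ ≤ Y x := le_trans (le_max_right _ _) h1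
    nlinarith [mul_nonneg hu hφY.le]
  have h6 := hL _ hbase r₁ hr₁0.le le_rfl
  have h7 : E φ (Y x + u * φ (Y x)) r₁ ≤ 3/2 := by
    have := abs_le.1 h6; linarith [this.2]
  set ρ : ℝ := u + r₁ * e with hρdef
  have hρu : u < ρ := by
    rw [hρdef]; nlinarith
  have hρw : ρ < u + w := by
    rw [hρdef]
    have : r₁ * e < w/2 := by
      have := (lt_div_iff₀ (by positivity : (0:ℝ) < 2*r₁)).1 hew
      nlinarith
    linarith
  have hρ1 : ρ ≤ u + 1 := by
    rw [hρdef]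
    have : r₁ * e < 1 := by
      have := (lt_div_iff₀ hr₁0).1 he1
      nlinarith
    linarith
  have hρIcc : ρ ∈ Set.Icc (0:ℝ) (u+1) := ⟨by rw [hρdef]; nlinarith, hρ1⟩
  have h8 := hd ρ hρIcc
  rw [Real.dist_eq] at h8
  have h9 : (3:ℝ)/4 * c < E φ (Y x) ρ := by
    have h10 := hlow ρ hρu hρw
    have h11 : |η ρ - E φ (Y x) ρ| < c/4 := h8
    have := abs_lt.1 h11
    linarith [this.2]
  have h12 : E φ (Y x) ρ ≤ 3/2 * e := by
    rw [hρdef, ← hedef] at hid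
    rw [hid]
    nlinarith
  nlinarith

/-- the master decomposition identity -/
lemma id3 (hφpos : ∀ x > (0 : ℝ), 0 < φ x) {s x : ℝ} (hx : 0 < x) (hs : 0 ≤ s) (c : ℝ) :
    E φ x (s + c) = E φ x s * E φ (x + s * φ x) (c / E φ x s) := by
  have h := ekey hφpos (φ := φ) (c / E φ x s) hx hs
  rw [show s + c / E φ x s * E φ x s = s + c by
    field_simp [(epos hφpos hx hs).ne']] at h
  exact h

lemma subA (hφpos : ∀ x > (0 : ℝ), 0 < φ x) (hO : ∃ C X : ℝ, ∀ x ≥ X, φ x ≤ C * x)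
    (hconv : ∀ K : Set ℝ, K ⊆ Set.Ici 0 → IsCompact K →
      TendstoUniformlyOn (fun x t => φ (x + t * φ x) / φ x) η atTop K)
    {s t : ℝ} (hs : 0 < s) (ht : 0 < t) (ha : 0 < η s) (hηt : η t = 0) :
    η (s + η s * t) = 0 := by
  set a : ℝ := η s with hadef
  set u : ℝ := s + a * t with hudef
  have hu0 : (0:ℝ) ≤ u := by rw [hudef]; nlinarith
  by_contra hne
  have hεpos : 0 < η u := lt_of_le_of_ne (eta_nonneg hφpos hconv hu0) (Ne.symm hne)
  set ε₀ : ℝ := η u with hε₀def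
  obtain ⟨r₁, X₂, hr₁0, hr₁1, hL⟩ := L1 hφpos hO hconv (1/2) (by norm_num)
  have hbten : Tendsto (fun x => E φ x s) atTop (𝓝 a) := hpt' hconv hs.le
  have hyat : Tendsto (fun x => x + s * φ x) atTop atTop := hbase hφpos hs.le
  have hEyt : Tendsto (fun x => E φ (x + s * φ x) t) atTop (𝓝 (η t)) :=
    (hpt' hconv ht.le).comp hyat
  have hEu : Tendsto (fun x => E φ x u) atTop (𝓝 ε₀) := hpt' hconv hu0
  have hEbto : Tendsto (fun x => E φ x (s + t * E φ x s)) atTop (𝓝 0) := by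
    have h1 : Tendsto (fun x => E φ x s * E φ (x + s * φ x) t) atTop (𝓝 (a * η t)) :=
      hbten.mul hEyt
    rw [hηt, mul_zero] at h1
    apply h1.congr'
    filter_upwards [eventually_gt_atTop (0:ℝ)] with x hx
    have h2 := id3 hφpos (φ := φ) hx hs.le (t * E φ x s)
    rw [mul_div_assoc, div_self (epos hφpos hx hs.le).ne', mul_one] at h2
    exact h2.symm
  -- eventually E x s < a
  have hento : ∀ᶠ x in atTop, E φ x s < a := by
    filter_upwards [hEu.eventually (eventually_gt_nhds (show ε₀/2 < ε₀ by linarith)),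
      hEbto.eventually (eventually_lt_nhds (show (0:ℝ) < ε₀/4 by linarith)),
      hbten.eventually (eventually_lt_nhds
        (show a < a + r₁ * ε₀ / (2 * t) by
          have : 0 < r₁ * ε₀ / (2 * t) := by positivity
          linarith)),
      eventually_ge_atTop (max 1 X₂)] with x h1 h2 h3 h4
    by_contra hba
    push_neg at hba
    have hx1 : (1:ℝ) ≤ x := le_trans (le_max_left _ _) h4
    have hx0 : (0:ℝ) < x := lt_of_lt_of_le one_pos hx1
    have hφx := hφpos x hx0
    have hExu0 : 0 < E φ x u := epos hφpos hx0 hu0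
    have hid := id3 hφpos (φ := φ) hx0 hu0 ((E φ x s - a) * t)
    rw [show u + (E φ x s - a) * t = s + t * E φ x s by rw [hudef]; ring] at hid
    set r : ℝ := (E φ x s - a) * t / E φ x u with hrdef
    have hr0 : 0 ≤ r := div_nonneg (mul_nonneg (by linarith) ht.le) hExu0.le
    have hrr : r ≤ r₁ := by
      rw [hrdef, div_le_iff₀ hExu0]
      have h5 : (E φ x s - a) * t < r₁ * ε₀ / 2 := by
        have h6 : E φ x s - a < r₁ * ε₀ / (2 * t) := by linarith
        have := mul_lt_mul_of_pos_right h6 ht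
        calc (E φ x s - a) * t < r₁ * ε₀ / (2 * t) * t := this
          _ = r₁ * ε₀ / 2 := by field_simp
      nlinarith
    have hbase2 : X₂ ≤ x + u * φ x := by
      have h5 : X₂ ≤ x := le_trans (le_max_right _ _) h4
      nlinarith [mul_nonneg hu0 hφx.le]
    have hLb := hL _ hbase2 r hr0 hrr
    have h7 : 1/2 ≤ E φ (x + u * φ x) r := by
      have := abs_le.1 hLb; linarith [this.1]
    have h8 : ε₀ / 4 < E φ x u * E φ (x + u * φ x) r := by
      nlinarith [mul_le_mul_of_nonneg_left h7 hExu0.le]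
    rw [hid] at h2
    linarith
  -- the sequence v x := a*t / E x s, approaching t from above
  set v : ℝ → ℝ := fun x => a * t / E φ x s with hvdef
  have hv2 : Tendsto v atTop (𝓝 t) := by
    have h0 : Tendsto (fun x => a * t / E φ x s) atTop (𝓝 (a * t / a)) :=
      Tendsto.div tendsto_const_nhds hbten ha.ne'
    rw [show a * t / a = t by rw [mul_comm, mul_div_assoc, div_self ha.ne', mul_one]] at h0
    exact h0
  have hv1 : ∀ᶠ x in atTop, t < v x := by
    filter_upwards [hento, eventually_gt_atTop (0:ℝ)] with x h1 hx0
    have hbx0 : 0 < E φ x s := epos hφpos hx0 hs.le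
    rw [hvdef]
    simp only []
    rw [lt_div_iff₀ hbx0]
    nlinarith
  have hEyv_eq : ∀ x : ℝ, 0 < x →
      E φ (x + s * φ x) (v x) = E φ x u / E φ x s := by
    intro x hx0
    have hbx0 : 0 < E φ x s := epos hφpos hx0 hs.le
    have h2 := id3 hφpos (φ := φ) hx0 hs.le (a * t)
    rw [← hudef] at h2
    rw [show v x = a * t / E φ x s from rfl]
    rw [h2]
    field_simp
  have hEyv : Tendsto (fun x => E φ x u / E φ x s) atTop (𝓝 (ε₀ / a)) :=
    hEu.div hbten ha.ne'
  have hv3 : ∀ᶠ x in atTop, ε₀ / (2 * a) ≤ η (v x) := by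
    have hd := (Metric.tendstoUniformlyOn_iff.1
      (hconv (Set.Icc 0 (t+1)) (fun x hx => hx.1) isCompact_Icc)) (ε₀/(4*a)) (by positivity)
    have hdY : ∀ᶠ x in atTop, ∀ ρ ∈ Set.Icc (0:ℝ) (t+1),
        dist (η ρ) (φ (x + s * φ x + ρ * φ (x + s * φ x)) / φ (x + s * φ x)) < ε₀/(4*a) :=
      hyat.eventually hd
    filter_upwards [hdY, hv1, hv2.eventually (eventually_le_nhds (show t < t+1 by linarith)),
      hEyv.eventually (eventually_gt_nhds (show 3*ε₀/(4*a) < ε₀/a by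
        rw [div_lt_div_iff₀ (by positivity) (by positivity)]; nlinarith)),
      eventually_gt_atTop (0:ℝ)] with x hd' h1 h2 h3 hx0
    have hvIcc : v x ∈ Set.Icc (0:ℝ) (t+1) := ⟨by linarith [h1], h2⟩
    have h5 := hd' (v x) hvIcc
    rw [Real.dist_eq] at h5
    have h6 : |η (v x) - E φ (x + s * φ x) (v x)| < ε₀/(4*a) := h5
    rw [hEyv_eq x hx0] at h6
    have h9 := abs_lt.1 h6
    have e1 : 3 * ε₀ / (4 * a) = 3 * (ε₀ / (4 * a)) := by ring
    have e2 : ε₀ / (2 * a) = 2 * (ε₀ / (4 * a)) := by ring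
    linarith [h9.2, h3]
  obtain ⟨w, hw0, hwin⟩ := WL hφpos hO hconv ht.le (show (0:ℝ) < ε₀/(2*a) by positivity)
    v hv1 hv2 hv3
  refine CRASH hφpos hO hconv ht.le (show (0:ℝ) < ε₀/(2*a)/2 by positivity) hw0 hwin
    (fun x => x + s * φ x) hyat ?_
  rw [← hηt]
  exact hEyt

lemma subB (hφpos : ∀ x > (0 : ℝ), 0 < φ x) (hO : ∃ C X : ℝ, ∀ x ≥ X, φ x ≤ C * x)
    (hconv : ∀ K : Set ℝ, K ⊆ Set.Ici 0 → IsCompact K →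
      TendstoUniformlyOn (fun x t => φ (x + t * φ x) / φ x) η atTop K)
    {s t : ℝ} (hs : 0 < s) (ht : 0 < t) (ha : 0 < η s) (hηt : 0 < η t)
    (hηu : η (s + η s * t) = 0) : False := by
  set a : ℝ := η s with hadef
  set u : ℝ := s + a * t with hudef
  have hu0 : (0:ℝ) ≤ u := by rw [hudef]; nlinarith
  set P : ℝ := a * η t with hPdef
  have hP0 : 0 < P := by rw [hPdef]; positivity
  obtain ⟨r₁, X₂, hr₁0, hr₁1, hL⟩ := L1 hφpos hO hconv (1/2) (by norm_num)
  have hbten : Tendsto (fun x => E φ x s) atTop (𝓝 a) := hpt' hconv hs.le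
  have hyat : Tendsto (fun x => x + s * φ x) atTop atTop := hbase hφpos hs.le
  have hEyt : Tendsto (fun x => E φ (x + s * φ x) t) atTop (𝓝 (η t)) :=
    (hpt' hconv ht.le).comp hyat
  have hEu : Tendsto (fun x => E φ x u) atTop (𝓝 0) := by
    have := hpt' hconv hu0 (η := η)
    rwa [show η u = 0 from hηu] at this
  have hEbto : Tendsto (fun x => E φ x (s + t * E φ x s)) atTop (𝓝 P) := by
    have h1 : Tendsto (fun x => E φ x s * E φ (x + s * φ x) t) atTop (𝓝 P) :=
      hbten.mul hEyt
    apply Filter.Tendsto.congr' _ h1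
    filter_upwards [eventually_gt_atTop (0:ℝ)] with x hx
    have h2 := id3 hφpos (φ := φ) hx hs.le (t * E φ x s)
    rw [mul_div_assoc, div_self (epos hφpos hx hs.le).ne', mul_one] at h2
    exact h2.symm
  -- eventually a < E x s
  have hento : ∀ᶠ x in atTop, a < E φ x s := by
    filter_upwards [hEbto.eventually (eventually_gt_nhds (show P/2 < P by linarith)),
      hEu.eventually (eventually_lt_nhds (show (0:ℝ) < P/8 by linarith)),
      hbten.eventually (eventually_gt_nhds (show a - r₁ * P / (2 * t) < a by
        have : 0 < r₁ * P / (2 * t) := by positivity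
        linarith)),
      eventually_ge_atTop (max 1 X₂)] with x h1 h2 h3 h4
    by_contra hba
    push_neg at hba
    have hx1 : (1:ℝ) ≤ x := le_trans (le_max_left _ _) h4
    have hx0 : (0:ℝ) < x := lt_of_lt_of_le one_pos hx1
    have hφx := hφpos x hx0
    have hbx0 : 0 < E φ x s := epos hφpos hx0 hs.le
    have hub0 : (0:ℝ) ≤ s + t * E φ x s := by nlinarith
    have hEb0 : 0 < E φ x (s + t * E φ x s) := epos hφpos hx0 hub0
    have hid := id3 hφpos (φ := φ) hx0 hub0 ((a - E φ x s) * t)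
    rw [show s + t * E φ x s + (a - E φ x s) * t = u by rw [hudef]; ring] at hid
    set r : ℝ := (a - E φ x s) * t / E φ x (s + t * E φ x s) with hrdef
    have hr0 : 0 ≤ r := div_nonneg (mul_nonneg (by linarith) ht.le) hEb0.le
    have hrr : r ≤ r₁ := by
      rw [hrdef, div_le_iff₀ hEb0]
      have h5 : (a - E φ x s) * t < r₁ * P / 2 := by
        have h6 : a - E φ x s < r₁ * P / (2 * t) := by linarith
        calc (a - E φ x s) * t < r₁ * P / (2 * t) * t := mul_lt_mul_of_pos_right h6 ht
          _ = r₁ * P / 2 := by field_simp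
      nlinarith
    have hbase2 : X₂ ≤ x + (s + t * E φ x s) * φ x := by
      have h5 : X₂ ≤ x := le_trans (le_max_right _ _) h4
      nlinarith [mul_nonneg hub0 hφx.le]
    have hLb := hL _ hbase2 r hr0 hrr
    have h7 : 1/2 ≤ E φ (x + (s + t * E φ x s) * φ x) r := by
      have := abs_le.1 hLb; linarith [this.1]
    have h8 : P / 8 < E φ x u := by
      rw [hid]
      have e1 : P/8 = 2*(P/2)*(1/8) := by ring
      nlinarith [mul_le_mul_of_nonneg_left h7 hEb0.le]
    linarith
  -- the sequence v x := s + t * E x s approaching u from above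
  set v : ℝ → ℝ := fun x => s + t * E φ x s with hvdef
  have hv2 : Tendsto v atTop (𝓝 u) := by
    have h0 : Tendsto (fun x => s + t * E φ x s) atTop (𝓝 (s + t * a)) :=
      Tendsto.add tendsto_const_nhds (Tendsto.const_mul t hbten)
    rwa [show s + t * a = u by rw [hudef]; ring] at h0
  have hv1 : ∀ᶠ x in atTop, u < v x := by
    filter_upwards [hento] with x h1
    rw [hudef]
    show s + a * t < s + t * E φ x s
    nlinarith
  have hv3 : ∀ᶠ x in atTop, P / 2 ≤ η (v x) := by
    have hd := (Metric.tendstoUniformlyOn_iff.1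
      (hconv (Set.Icc 0 (u+1)) (fun x hx => hx.1) isCompact_Icc)) (P/4) (by positivity)
    filter_upwards [hd, hv1, hv2.eventually (eventually_le_nhds (show u < u+1 by linarith)),
      hEbto.eventually (eventually_gt_nhds (show 3*(P/4) < P by linarith))] with x hd' h1 h2 h3
    have hvIcc : v x ∈ Set.Icc (0:ℝ) (u+1) := ⟨le_trans hu0 h1.le, h2⟩
    have h5 := hd' (v x) hvIcc
    rw [Real.dist_eq] at h5
    have h6 : |η (v x) - E φ x (v x)| < P/4 := h5
    have h7 : E φ x (v x) = E φ x (s + t * E φ x s) := rfl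
    rw [h7] at h6
    have h9 := abs_lt.1 h6
    have e2 : P/2 = 2*(P/4) := by ring
    linarith [h9.2]
  obtain ⟨w, hw0, hwin⟩ := WL hφpos hO hconv hu0 (show (0:ℝ) < P/2 by linarith) v hv1 hv2 hv3
  exact CRASH hφpos hO hconv hu0 (show (0:ℝ) < P/2/2 by linarith) hw0 hwin
    (fun x => x) tendsto_id hEu

set_option maxHeartbeats 4000000 in
lemma subC (hφpos : ∀ x > (0 : ℝ), 0 < φ x) (hO : ∃ C X : ℝ, ∀ x ≥ X, φ x ≤ C * x)
    (hconv : ∀ K : Set ℝ, K ⊆ Set.Ici 0 → IsCompact K →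
      TendstoUniformlyOn (fun x t => φ (x + t * φ x) / φ x) η atTop K)
    {s t : ℝ} (hs : 0 < s) (ht : 0 < t) (ha : 0 < η s) (hηt : 0 < η t)
    (hηu : 0 < η (s + η s * t)) : η (s + η s * t) = η s * η t := by
  set a : ℝ := η s with hadef
  set u : ℝ := s + a * t with hudef
  have hu0 : (0:ℝ) ≤ u := by rw [hudef]; nlinarith [mul_pos ha ht]
  have hbten : Tendsto (fun x => E φ x s) atTop (𝓝 a) := hpt' hconv hs.le
  have hyat : Tendsto (fun x => x + s * φ x) atTop atTop := hbase hφpos hs.le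
  have hEyt : Tendsto (fun x => E φ (x + s * φ x) t) atTop (𝓝 (η t)) :=
    (hpt' hconv ht.le).comp hyat
  have hEu : Tendsto (fun x => E φ x u) atTop (𝓝 (η u)) := hpt' hconv hu0
  set M : ℝ := 4 * (a * η t) + 2 * η u with hMdef
  have hM0 : 0 < M := by rw [hMdef]; positivity
  have key : ∀ δ : ℝ, 0 < δ → |η u - a * η t| ≤ δ * M := by
    intro δ hδ
    obtain ⟨r₁, X₂, hr₁0, hr₁1, hL⟩ := L1 hφpos hO hconv δ hδ
    set m : ℝ := min (r₁ * (a * η t) / (4 * t)) (r₁ * η u / (2 * t)) with hmdef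
    have hm0 : 0 < m := lt_min (by positivity) (by positivity)
    have hmev : ∀ᶠ x in atTop, |E φ x s - a| < m := by
      have := Metric.tendsto_nhds.1 hbten m hm0
      simpa [Real.dist_eq] using this
    have hG : Tendsto (fun x => |E φ x u - E φ x s * E φ (x + s * φ x) t|) atTop
        (𝓝 (|η u - a * η t|)) := (hEu.sub (hbten.mul hEyt)).abs
    apply le_of_tendsto hG
    filter_upwards [eventually_ge_atTop (max 1 X₂),
      hbten.eventually (eventually_lt_nhds (show a < 2*a by linarith)),
      hbten.eventually (eventually_gt_nhds (show a/2 < a by linarith)),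
      hEyt.eventually (eventually_lt_nhds (show η t < 2*η t by linarith)),
      hEyt.eventually (eventually_gt_nhds (show η t/2 < η t by linarith)),
      hEu.eventually (eventually_lt_nhds (show η u < 2*η u by linarith)),
      hEu.eventually (eventually_gt_nhds (show η u/2 < η u by linarith)),
      hmev] with x hx h2a h2b h3a h3b h4a h4b hmx
    have hx1 : (1:ℝ) ≤ x := le_trans (le_max_left _ _) hx
    have hX2x : X₂ ≤ x := le_trans (le_max_right _ _) hx
    have hx0 : (0:ℝ) < x := lt_of_lt_of_le one_pos hx1
    have hφx := hφpos x hx0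
    have hbx0 : 0 < E φ x s := epos hφpos hx0 hs.le
    have hyx0 : (0:ℝ) < x + s * φ x := by nlinarith [mul_pos hs hφx]
    have hφy := hφpos _ hyx0
    have hEyt0 : 0 < E φ (x + s * φ x) t := epos hφpos hyx0 ht.le
    have hExu0 : 0 < E φ x u := epos hφpos hx0 hu0
    have hid3 := id3 hφpos (φ := φ) hx0 hs.le (a * t)
    rw [← hudef] at hid3
    rcases le_or_gt (E φ x s) a with hba | hba
    · -- branch 1 : E x s ≤ a
      have hdec := id3 hφpos (φ := φ) hyx0 ht.le (a * t / E φ x s - t)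
      rw [show t + (a * t / E φ x s - t) = a * t / E φ x s by ring] at hdec
      set r : ℝ := (a * t / E φ x s - t) / E φ (x + s * φ x) t with hrdef
      have hnum0 : 0 ≤ a * t / E φ x s - t := by
        rw [sub_nonneg, le_div_iff₀ hbx0]
        nlinarith
      have hr0 : 0 ≤ r := div_nonneg hnum0 hEyt0.le
      have hrr : r ≤ r₁ := by
        rw [hrdef, div_le_iff₀ hEyt0]
        have h5 : a - E φ x s ≤ m := by
          have := le_abs_self (a - E φ x s)
          rw [abs_sub_comm] at this
          linarith
        have h6 : a * t / E φ x s - t = (a - E φ x s) * t / E φ x s := by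
          field_simp
        have h7 : (a - E φ x s) * t ≤ r₁ * (a * η t) / 4 := by
          have hm1 : m ≤ r₁ * (a * η t) / (4 * t) := min_le_left _ _
          calc (a - E φ x s) * t ≤ m * t := by nlinarith
            _ ≤ r₁ * (a * η t) / (4 * t) * t := by nlinarith
            _ = r₁ * (a * η t) / 4 := by field_simp
        rw [h6]
        rw [div_le_iff₀ hbx0]
        have h8 : r₁ * (a * η t) / 4 ≤ r₁ * E φ (x + s * φ x) t * E φ x s := by
          have e1 : r₁ * (η t / 2) * (a / 2) = r₁ * (a * η t) / 4 := by ring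
          have h8a : r₁ * (η t / 2) * (a / 2) ≤ r₁ * E φ (x + s * φ x) t * (a / 2) :=
            mul_le_mul_of_nonneg_right (mul_le_mul_of_nonneg_left h3b.le hr₁0.le)
              (by linarith)
          have h8b : r₁ * E φ (x + s * φ x) t * (a / 2) ≤
              r₁ * E φ (x + s * φ x) t * E φ x s :=
            mul_le_mul_of_nonneg_left h2b.le (mul_nonneg hr₁0.le hEyt0.le)
          linarith
        linarith [h7, h8]
      have hbase2 : X₂ ≤ x + s * φ x + t * φ (x + s * φ x) := by
        nlinarith [mul_nonneg hs.le hφx.le, mul_nonneg ht.le hφy.le]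
      have hLb := hL _ hbase2 r hr0 hrr
      have hexp : E φ x u = E φ x s * (E φ (x + s * φ x) t *
          E φ (x + s * φ x + t * φ (x + s * φ x)) r) := by
        rw [hid3, hdec]
      have hdiff : E φ x u - E φ x s * E φ (x + s * φ x) t
          = E φ x s * E φ (x + s * φ x) t *
            (E φ (x + s * φ x + t * φ (x + s * φ x)) r - 1) := by
        rw [hexp]; ring
      rw [hdiff, abs_mul, abs_of_pos (mul_pos hbx0 hEyt0)]
      have q1 : E φ x s * E φ (x + s * φ x) t ≤ 2*a * (2*η t) := by nlinarith
      have q2 : E φ x s * E φ (x + s * φ x) t *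
          |E φ (x + s * φ x + t * φ (x + s * φ x)) r - 1| ≤ 2*a * (2*η t) * δ :=
        mul_le_mul q1 hLb (abs_nonneg _) (by positivity)
      have q3 : 2*a * (2*η t) * δ ≤ δ * M := by
        rw [hMdef]; nlinarith [eta_nonneg hφpos hconv hu0]
      linarith
    · -- branch 2 : a < E x s
      set p : ℝ := a * t / E φ x s with hpdef
      have hp0 : 0 ≤ p := div_nonneg (mul_nonneg ha.le ht.le) hbx0.le
      have hEyp0 : 0 < E φ (x + s * φ x) p := epos hφpos hyx0 hp0
      have hEyp : E φ (x + s * φ x) p = E φ x u / E φ x s := by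
        rw [eq_div_iff hbx0.ne', mul_comm]
        exact hid3.symm
      have hdec := id3 hφpos (φ := φ) hyx0 hp0 (t - p)
      rw [show p + (t - p) = t by ring] at hdec
      set r : ℝ := (t - p) / E φ (x + s * φ x) p with hrdef
      have hnum0 : 0 ≤ t - p := by
        rw [sub_nonneg, hpdef, div_le_iff₀ hbx0]
        nlinarith
      have hr0 : 0 ≤ r := div_nonneg hnum0 hEyp0.le
      have hreq : r = (E φ x s - a) * t / E φ x u := by
        rw [hrdef, hEyp, hpdef]
        field_simp
      have hrr : r ≤ r₁ := by
        rw [hreq, div_le_iff₀ hExu0]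
        have h5 : E φ x s - a ≤ m := by linarith [le_abs_self (E φ x s - a), hmx]
        have hm2 : m ≤ r₁ * η u / (2 * t) := min_le_right _ _
        have h7 : (E φ x s - a) * t ≤ r₁ * η u / 2 := by
          calc (E φ x s - a) * t ≤ m * t := by nlinarith
            _ ≤ r₁ * η u / (2 * t) * t := by nlinarith
            _ = r₁ * η u / 2 := by field_simp
        have h9 : r₁ * (η u / 2) ≤ r₁ * E φ x u := mul_le_mul_of_nonneg_left h4b.le hr₁0.le
        have e : r₁ * η u / 2 = r₁ * (η u / 2) := by ring
        linarith
      have hbase2 : X₂ ≤ x + s * φ x + p * φ (x + s * φ x) := by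
        nlinarith [mul_nonneg hs.le hφx.le, mul_nonneg hp0 hφy.le]
      have hLb := hL _ hbase2 r hr0 hrr
      have hdiff : E φ x u - E φ x s * E φ (x + s * φ x) t
          = - (E φ x u * (E φ (x + s * φ x + p * φ (x + s * φ x)) r - 1)) := by
        rw [hdec, hEyp]
        have hc : E φ x s * (E φ x u / E φ x s) = E φ x u := by
          rw [mul_comm]; exact div_mul_cancel₀ _ hbx0.ne'
        rw [← mul_assoc, hc]
        ring
      rw [hdiff, abs_neg, abs_mul, abs_of_pos hExu0]
      have q2 : E φ x u * |E φ (x + s * φ x + p * φ (x + s * φ x)) r - 1| ≤ 2*η u * δ :=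
        mul_le_mul h4a.le hLb (abs_nonneg _) (by positivity)
      have q3 : 2*η u * δ ≤ δ * M := by
        rw [hMdef]; nlinarith [mul_pos ha hηt]
      linarith
  -- conclude
  by_contra hne
  have hd0 : 0 < |η u - a * η t| := by
    rw [abs_pos, sub_ne_zero]
    exact hne
  have hk := key (|η u - a * η t| / (2 * M)) (by positivity)
  have he : |η u - a * η t| / (2 * M) * M = |η u - a * η t| / 2 := by
    field_simp [hM0.ne']
  rw [he] at hk
  linarith

end GSaux

/-- **Theorem O.** If `φ : (0,∞) → (0,∞)` satisfies `φ(x) = O(x)`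
as `x → ∞` and `η_x(t) := φ(x + t·φ(x))/φ(x)` converges to `η(t)` as `x → ∞`,
locally uniformly in `t` on `[0, ∞)`, then `η` satisfies the Gołąb–Schinzel
functional equation `η(s + η(s)·t) = η(s)·η(t)` for all `s, t ≥ 0`. -/
theorem theorem_O_golab_schinzel (φ η : ℝ → ℝ)
    (hφpos : ∀ x > (0 : ℝ), 0 < φ x)
    (hO : ∃ C X : ℝ, ∀ x ≥ X, φ x ≤ C * x)
    (hconv : ∀ K : Set ℝ, K ⊆ Set.Ici 0 → IsCompact K →
      TendstoUniformlyOn (fun x t => φ (x + t * φ x) / φ x) η atTop K) :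
    ∀ s ≥ (0 : ℝ), ∀ t ≥ (0 : ℝ), η (s + η s * t) = η s * η t := by
  intro s hs t ht
  have hη0 : η 0 = 1 := GSaux.eta_zero hφpos hconv
  rcases eq_or_lt_of_le hs with hs0 | hs0
  · rw [← hs0, hη0, one_mul, zero_add, one_mul]
  rcases eq_or_lt_of_le ht with ht0 | ht0
  · rw [← ht0, mul_zero, add_zero, hη0, mul_one]
  have hηs := GSaux.eta_nonneg hφpos hconv hs
  rcases eq_or_lt_of_le hηs with has | has
  · rw [← has, zero_mul, add_zero, zero_mul, ← has]
  have hηt := GSaux.eta_nonneg hφpos hconv ht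
  rcases eq_or_lt_of_le hηt with hat | hat
  · rw [← hat, mul_zero]
    exact GSaux.subA hφpos hO hconv hs0 ht0 has hat.symm
  have hu0 : (0:ℝ) ≤ s + η s * t := by nlinarith
  have hηu := GSaux.eta_nonneg hφpos hconv hu0
  rcases eq_or_lt_of_le hηu with hau | hau
  · exact (GSaux.subB hφpos hO hconv hs0 ht0 has hat hau.symm).elim
  · exact GSaux.subC hφpos hO hconv hs0 ht0 has hat hau
end

section
/- Every function h : [0, ∞) → (0, ∞) satisfying the Gołąb–Schinzel functional equation h(s + h(s)·t) = h(s)·h(t) for all s, t ≥ 0 is continuous, and there exists ρ ≥ 0 such that h(t) = 1 + ρ·t for all t ≥ 0. -/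
/-- Every positive solution `h : [0,∞) → (0,∞)` of the
Gołąb–Schinzel equation `h(s + h(s)·t) = h(s)·h(t)` (for `s, t ≥ 0`) is
continuous on `[0,∞)` and of the form `h(t) = 1 + ρ·t` for some `ρ ≥ 0`. -/
theorem golab_schinzel_positive_solutions (h : ℝ → ℝ)
    (hpos : ∀ t ≥ (0 : ℝ), 0 < h t)
    (hGS : ∀ s ≥ (0 : ℝ), ∀ t ≥ (0 : ℝ), h (s + h s * t) = h s * h t) :
    ContinuousOn h (Set.Ici 0) ∧
    ∃ ρ ≥ (0 : ℝ), ∀ t ≥ (0 : ℝ), h t = 1 + ρ * t := by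
  have h0 : h 0 = 1 := by
    have key := hGS 0 le_rfl 0 le_rfl
    simp at key
    have h0pos := hpos 0 le_rfl
    nlinarith
  have hge1 : ∀ t ≥ (0:ℝ), 1 ≤ h t := by
    intro t ht
    by_contra hlt
    push_neg at hlt
    have hc : 0 < h t := hpos t ht
    have h1c : 0 < 1 - h t := by linarith
    set L := t / (1 - h t) with hL'
    have hL : 0 ≤ L := div_nonneg ht h1c.le
    have key := hGS t ht L hL
    have heq : t + h t * L = L := by
      rw [hL']; field_simp; ring
    rw [heq] at key
    have hLpos := hpos L hL
    nlinarith
  have mono : ∀ u ≥ (0:ℝ), ∀ v, u ≤ v → h u ≤ h v := by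
    intro u hu v huv
    have hupos := hpos u hu
    have ht : 0 ≤ (v - u) / h u := div_nonneg (by linarith) hupos.le
    have key := hGS u hu _ ht
    have heq : u + h u * ((v - u) / h u) = v := by field_simp; ring
    rw [heq] at key
    have := hge1 _ ht
    nlinarith
  have flat : ∀ δ > (0:ℝ), (∀ t, 0 ≤ t → t ≤ δ → h t = 1) → ∀ t ≥ (0:ℝ), h t = 1 := by
    intro δ hδ hone
    have hn : ∀ n : ℕ, ∀ t, 0 ≤ t → t ≤ n * δ → h t = 1 := by
      intro n
      induction n with
      | zero =>
        intro t ht ht'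
        simp at ht'
        have : t = 0 := le_antisymm (by linarith) ht
        rw [this, h0]
      | succ n ih =>
        intro t ht ht'
        by_cases hcase : t ≤ n * δ
        · exact ih t ht hcase
        · push_neg at hcase
          have hnδ : (0:ℝ) ≤ n * δ := by positivity
          have h1 : h (n * δ) = 1 := ih (n*δ) hnδ le_rfl
          have key := hGS (n*δ) hnδ (t - n*δ) (by linarith)
          rw [h1] at key
          simp at key
          rw [key]
          exact hone _ (by linarith) (by push_cast at ht' ⊢; linarith)
    intro t ht
    obtain ⟨n, hn'⟩ := exists_nat_ge (t / δ)
    refine hn n t ht ?_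
    rw [div_le_iff₀ hδ] at hn'
    linarith
  by_cases hall : ∀ t ≥ (0:ℝ), h t = 1
  · refine ⟨continuousOn_const.congr (fun t ht => hall t ht), 0, le_rfl, fun t ht => ?_⟩
    rw [hall t ht]; ring
  · push_neg at hall
    obtain ⟨a, ha, hne⟩ := hall
    have ha1 : 1 < h a := lt_of_le_of_ne (hge1 a ha) (Ne.symm hne)
    have hapos : 0 < a := by
      rcases lt_or_eq_of_le ha with h' | h'
      · exact h'
      · exfalso; rw [← h', h0] at hne; exact hne rfl
    have hinj : ∀ u ≥ (0:ℝ), ∀ v ≥ (0:ℝ), h u = h v → u = v := by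
      intro u hu v hv huv
      by_contra hne'
      have key : ∀ p q : ℝ, 0 ≤ p → p < q → h p = h q → False := by
        intro p q hp hpq hpq'
        have hppos := hpos p hp
        have hδ : 0 < (q - p) / h p := div_pos (by linarith) hppos
        have hone : ∀ t, 0 ≤ t → t ≤ (q - p) / h p → h t = 1 := by
          intro t ht htδ
          have key2 := hGS p hp t ht
          have hle : p + h p * t ≤ q := by
            rw [le_div_iff₀ hppos] at htδ
            nlinarith
          have hx0 : p ≤ p + h p * t := by nlinarith
          have hx1 : h p ≤ h (p + h p * t) := mono p hp _ hx0
          have hx2 : h (p + h p * t) ≤ h q := mono (p + h p * t) (by linarith) q hle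
          rw [← hpq'] at hx2
          have heq : h (p + h p * t) = h p := le_antisymm hx2 hx1
          rw [heq] at key2
          nlinarith
        exact hne (flat _ hδ hone a ha)
      rcases lt_trichotomy u v with h' | h' | h'
      · exact key u v hu h' huv
      · exact hne' h'
      · exact key v u hv h' huv.symm
    have hρ : 0 ≤ (h a - 1) / a := div_nonneg (by linarith) hapos.le
    have hform : ∀ t ≥ (0:ℝ), h t = 1 + (h a - 1) / a * t := by
      intro t ht
      have htpos := hpos t ht
      have e1 := hGS a ha t ht
      have e2 := hGS t ht a ha
      have e3 : h (a + h a * t) = h (t + h t * a) := by rw [e1, e2]; ring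
      have heq := hinj (a + h a * t) (by nlinarith) (t + h t * a) (by nlinarith) e3
      field_simp
      nlinarith [heq]
    refine ⟨?_, (h a - 1) / a, hρ, hform⟩
    exact (Continuous.continuousOn (continuous_const.add (continuous_const.mul continuous_id) : Continuous fun t => 1 + (h a - 1) / a * t)).congr hform
end

section
/- Let ρ > 0, σ > 0 and κ ∈ ℝ, and define K_κ(t) := ((1 + ρ·t)^κ − 1)/σ for t ∈ G_ρ. Then K_κ maps G_ρ into G_σ and is additive from (G_ρ, ∘_ρ) to (G_σ, ∘_σ): K_κ(x ∘_ρ y) = K_κ(x) ∘_σ K_κ(y) for all x, y ∈ G_ρ. -/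
/-- For `ρ, σ > 0` and `κ : ℝ`, the map
`K_κ(t) = ((1+ρ·t)^κ - 1)/σ` sends the Popa group `G_ρ` into `G_σ` and is
additive: `K_κ(x ∘_ρ y) = K_κ(x) ∘_σ K_κ(y)`, i.e.
`K_κ(x + y + ρ*x*y) = K_κ(x) + K_κ(y) + σ*K_κ(x)*K_κ(y)` for all `x, y ∈ G_ρ`. -/
theorem popa_canonical_map_additive (ρ σ κ : ℝ) (hρ : 0 < ρ) (hσ : 0 < σ)
    (K : ℝ → ℝ) (hK : ∀ t, K t = ((1 + ρ * t) ^ κ - 1) / σ) :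
    (∀ x : ℝ, 0 < 1 + ρ * x → 0 < 1 + σ * K x) ∧
    (∀ x y : ℝ, 0 < 1 + ρ * x → 0 < 1 + ρ * y →
      K (x + y + ρ * x * y) = K x + K y + σ * K x * K y) := by
  have hσ' : σ ≠ 0 := ne_of_gt hσ
  have key : ∀ t : ℝ, 1 + σ * K t = (1 + ρ * t) ^ κ := by
    intro t
    rw [hK t]
    field_simp
    ring
  constructor
  · intro x hx
    rw [key x]
    exact Real.rpow_pos_of_pos hx κ
  · intro x y hx hy
    have h1 : 1 + ρ * (x + y + ρ * x * y) = (1 + ρ * x) * (1 + ρ * y) := by ring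
    have h2 : 1 + σ * K (x + y + ρ * x * y) =
        (1 + σ * K x) * (1 + σ * K y) := by
      rw [key, key, key, h1, Real.mul_rpow hx.le hy.le]
    nlinarith [h2]
end

section
/- Let ρ, σ ∈ (0, ∞) and let ψ : G_ρ → G_σ be additive, i.e. ψ(x ∘_ρ y) = ψ(x) ∘_σ ψ(y) for all x, y ∈ G_ρ. If ψ is bounded above on some nonempty open subinterval of G_ρ, then ψ is continuous and there exists κ ∈ ℝ such that ψ(t) = ((1 + ρ·t)^κ − 1)/σ for all t ∈ G_ρ. Likewise, if ρ ∈ (0, ∞) and ψ : G_ρ → ℝ satisfies ψ(x ∘_ρ y) = ψ(x) + ψ(y) and is bounded above on a nonempty open subinterval, then ψ(t) = κ·log(1 + ρ·t) for some κ ∈ ℝ. -/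
/-- An additive function `ℝ → ℝ` bounded above on a nonempty open interval is linear. -/
lemma cauchy_linear_of_bddAbove (f : ℝ → ℝ) (hf : ∀ x y, f (x + y) = f x + f y)
    (a b M : ℝ) (hab : a < b) (hM : ∀ x ∈ Set.Ioo a b, f x ≤ M) :
    ∀ x, f x = f 1 * x := by
  -- the "error" additive map
  set G : ℝ →+ ℝ := AddMonoidHom.mk' (fun x => f x - f 1 * x)
    (by intro x y; simp only [hf]; ring) with hG
  have hGdef : ∀ x, G x = f x - f 1 * x := fun x => rfl
  -- G vanishes on rationals
  have hrat : ∀ q : ℚ, f (q : ℝ) = (q : ℝ) * f 1 := by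
    intro q
    have F : ℝ →+ ℝ := AddMonoidHom.mk' f hf
    have := (AddMonoidHom.mk' f hf).toRatLinearMap.map_smul q (1 : ℝ)
    simpa [AddMonoidHom.mk'_apply, Rat.smul_def, mul_comm] using this
  have hGrat : ∀ q : ℚ, G (q : ℝ) = 0 := by
    intro q; rw [hGdef, hrat]; ring
  -- G is bounded above on (a,b)
  set M' : ℝ := M + |f 1| * (|a| + |b|) with hM'
  have hGbdd : ∀ x ∈ Set.Ioo a b, G x ≤ M' := by
    intro x hx
    have h1 : f x ≤ M := hM x hx
    have h2 : |x| ≤ |a| + |b| := by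
      have := abs_le_max_abs_abs (le_of_lt hx.1) (le_of_lt hx.2)
      have h4 : max |a| |b| ≤ |a| + |b| :=
        max_le (le_add_of_nonneg_right (abs_nonneg b)) (le_add_of_nonneg_left (abs_nonneg a))
      linarith
    have h3 : -(f 1 * x) ≤ |f 1| * (|a| + |b|) := by
      calc -(f 1 * x) ≤ |f 1 * x| := neg_le_abs _
        _ = |f 1| * |x| := abs_mul _ _
        _ ≤ |f 1| * (|a| + |b|) := by
            exact mul_le_mul_of_nonneg_left h2 (abs_nonneg _)
    rw [hGdef]; linarith
  -- G is identically zero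
  intro x
  by_contra hx
  have hGx : G x ≠ 0 := by rw [hGdef]; intro h; apply hx; linarith
  -- WLOG positive value
  obtain ⟨c, hc⟩ : ∃ c, 0 < G c := by
    rcases lt_or_gt_of_ne hGx with h | h
    · exact ⟨-x, by rw [map_neg]; linarith⟩
    · exact ⟨x, h⟩
  obtain ⟨n, hn⟩ := exists_nat_gt (M' / G c)
  have hnM : M' < (n : ℝ) * G c := by
    have := (div_lt_iff₀ hc).mp hn
    linarith
  obtain ⟨q, hq1, hq2⟩ := exists_rat_btwn (show a - (n : ℝ) * c < b - (n : ℝ) * c by linarith)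
  set y : ℝ := (q : ℝ) + (n : ℝ) * c with hy
  have hymem : y ∈ Set.Ioo a b := ⟨by simp only [hy]; linarith, by simp only [hy]; linarith⟩
  have hGy : G y = (n : ℝ) * G c := by
    have h1 : G y = G (q : ℝ) + G ((n : ℝ) * c) := map_add G _ _
    have h2 : G ((n : ℝ) * c) = (n : ℝ) * G c := by
      have := map_nsmul G n c
      simpa [nsmul_eq_mul] using this
    rw [h1, h2, hGrat, zero_add]
  have := hGbdd y hymem
  rw [hGy] at this
  linarith

/-- Key reduction: an additive map on the Popa group bounded above on an open
subinterval is `κ · log(1+ρt)`. -/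
lemma popa_additive_log (ρ : ℝ) (hρ : 0 < ρ) (φ : ℝ → ℝ)
    (hadd : ∀ x y : ℝ, 0 < 1 + ρ * x → 0 < 1 + ρ * y →
      φ (x + y + ρ * x * y) = φ x + φ y)
    (hbdd : ∃ a b M : ℝ, a < b ∧ 0 < 1 + ρ * a ∧ ∀ x ∈ Set.Ioo a b, φ x ≤ M) :
    ∃ κ : ℝ, ∀ t : ℝ, 0 < 1 + ρ * t → φ t = κ * Real.log (1 + ρ * t) := by
  obtain ⟨a, b, M, hab, hapos, hM⟩ := hbdd
  set f : ℝ → ℝ := fun u => φ ((Real.exp u - 1) / ρ) with hf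
  have hρ' : ρ ≠ 0 := ne_of_gt hρ
  have hposarg : ∀ u : ℝ, 0 < 1 + ρ * ((Real.exp u - 1) / ρ) := by
    intro u
    have : 1 + ρ * ((Real.exp u - 1) / ρ) = Real.exp u := by field_simp; ring
    rw [this]; exact Real.exp_pos u
  have hfadd : ∀ u v : ℝ, f (u + v) = f u + f v := by
    intro u v
    have h1 := hadd ((Real.exp u - 1) / ρ) ((Real.exp v - 1) / ρ) (hposarg u) (hposarg v)
    have h2 : (Real.exp u - 1) / ρ + (Real.exp v - 1) / ρ +
        ρ * ((Real.exp u - 1) / ρ) * ((Real.exp v - 1) / ρ) = (Real.exp (u + v) - 1) / ρ := by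
      rw [Real.exp_add]; field_simp; ring
    simp only [hf]
    rw [← h2, h1]
  have hbpos : 0 < 1 + ρ * b := by nlinarith
  have hlab : Real.log (1 + ρ * a) < Real.log (1 + ρ * b) :=
    Real.log_lt_log hapos (by nlinarith)
  have hfbdd : ∀ u ∈ Set.Ioo (Real.log (1 + ρ * a)) (Real.log (1 + ρ * b)), f u ≤ M := by
    intro u hu
    have h1 : 1 + ρ * a < Real.exp u := by
      have := Real.exp_lt_exp.mpr hu.1
      rwa [Real.exp_log hapos] at this
    have h2 : Real.exp u < 1 + ρ * b := by
      have := Real.exp_lt_exp.mpr hu.2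
      rwa [Real.exp_log hbpos] at this
    have hmem : (Real.exp u - 1) / ρ ∈ Set.Ioo a b := by
      constructor
      · rw [lt_div_iff₀ hρ]; nlinarith
      · rw [div_lt_iff₀ hρ]; nlinarith
    exact hM _ hmem
  have hlin := cauchy_linear_of_bddAbove f hfadd _ _ M hlab hfbdd
  refine ⟨f 1, fun t ht => ?_⟩
  have h1 : (Real.exp (Real.log (1 + ρ * t)) - 1) / ρ = t := by
    rw [Real.exp_log ht]; field_simp; ring
  have := hlin (Real.log (1 + ρ * t))
  simp only [hf] at this
  rw [h1] at this
  exact this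

/-- For `ρ, σ ∈ (0,∞)`: an additive map
`ψ : (G_ρ, ∘_ρ) → (G_σ, ∘_σ)` that is bounded above on some nonempty open
subinterval of `G_ρ` is continuous and of the canonical form
`ψ(t) = ((1+ρ·t)^κ - 1)/σ`; likewise an additive map `ψ₂ : (G_ρ, ∘_ρ) → (ℝ, +)`
bounded above on a nonempty open subinterval is of the form
`ψ₂(t) = κ·log(1+ρ·t)`. -/
theorem popa_additive_bounded_above (ρ σ : ℝ) (hρ : 0 < ρ) (hσ : 0 < σ)
    (ψ ψ₂ : ℝ → ℝ)
    (hmap : ∀ x : ℝ, 0 < 1 + ρ * x → 0 < 1 + σ * ψ x)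
    (hadd : ∀ x y : ℝ, 0 < 1 + ρ * x → 0 < 1 + ρ * y →
      ψ (x + y + ρ * x * y) = ψ x + ψ y + σ * ψ x * ψ y)
    (hbdd : ∃ a b M : ℝ, a < b ∧ 0 < 1 + ρ * a ∧
      ∀ x ∈ Set.Ioo a b, ψ x ≤ M)
    (hadd₂ : ∀ x y : ℝ, 0 < 1 + ρ * x → 0 < 1 + ρ * y →
      ψ₂ (x + y + ρ * x * y) = ψ₂ x + ψ₂ y)
    (hbdd₂ : ∃ a b M : ℝ, a < b ∧ 0 < 1 + ρ * a ∧
      ∀ x ∈ Set.Ioo a b, ψ₂ x ≤ M) :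
    (ContinuousOn ψ {x : ℝ | 0 < 1 + ρ * x} ∧
      ∃ κ : ℝ, ∀ t : ℝ, 0 < 1 + ρ * t → ψ t = ((1 + ρ * t) ^ κ - 1) / σ) ∧
    (∃ κ : ℝ, ∀ t : ℝ, 0 < 1 + ρ * t → ψ₂ t = κ * Real.log (1 + ρ * t)) := by
  -- first handle ψ via φ := log (1 + σ ψ)
  set φ : ℝ → ℝ := fun x => Real.log (1 + σ * ψ x) with hφ
  have hφadd : ∀ x y : ℝ, 0 < 1 + ρ * x → 0 < 1 + ρ * y →
      φ (x + y + ρ * x * y) = φ x + φ y := by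
    intro x y hx hy
    have h1 := hadd x y hx hy
    have h2 : 1 + σ * ψ (x + y + ρ * x * y) = (1 + σ * ψ x) * (1 + σ * ψ y) := by
      rw [h1]; ring
    simp only [hφ]
    rw [h2, Real.log_mul (ne_of_gt (hmap x hx)) (ne_of_gt (hmap y hy))]
  have hφbdd : ∃ a b M : ℝ, a < b ∧ 0 < 1 + ρ * a ∧ ∀ x ∈ Set.Ioo a b, φ x ≤ M := by
    obtain ⟨a, b, M, hab, hapos, hM⟩ := hbdd
    refine ⟨a, b, Real.log (1 + σ * M), hab, hapos, fun x hx => ?_⟩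
    have hx' : 0 < 1 + ρ * x := by rcases hx with ⟨h1, _⟩; nlinarith
    have h1 : 0 < 1 + σ * ψ x := hmap x hx'
    have h2 : 1 + σ * ψ x ≤ 1 + σ * M := by nlinarith [hM x hx]
    exact Real.log_le_log h1 h2
  obtain ⟨κ, hκ⟩ := popa_additive_log ρ hρ φ hφadd hφbdd
  have hform : ∀ t : ℝ, 0 < 1 + ρ * t → ψ t = ((1 + ρ * t) ^ κ - 1) / σ := by
    intro t ht
    have h1 := hκ t ht
    have h2 : 1 + σ * ψ t = (1 + ρ * t) ^ κ := by
      have h3 : Real.exp (φ t) = 1 + σ * ψ t := Real.exp_log (hmap t ht)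
      rw [h1] at h3
      rw [← h3, Real.rpow_def_of_pos ht, mul_comm]
    rw [eq_div_iff (ne_of_gt hσ)]
    linarith
  have hcont : ContinuousOn ψ {x : ℝ | 0 < 1 + ρ * x} := by
    have hc : ContinuousOn (fun t : ℝ => ((1 + ρ * t) ^ κ - 1) / σ) {x : ℝ | 0 < 1 + ρ * x} := by
      apply ContinuousOn.div_const
      apply ContinuousOn.sub _ continuousOn_const
      apply ContinuousOn.rpow_const
      · exact (continuous_const.add (continuous_const.mul continuous_id)).continuousOn
      · intro x hx; exact Or.inl (ne_of_gt hx)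
    exact hc.congr fun t ht => hform t ht
  exact ⟨⟨hcont, κ, hform⟩, popa_additive_log ρ hρ ψ₂ hadd₂ hbdd₂⟩
end

section
/- Let ρ, σ ≥ 0 and let S : G_ρ → G_σ be subadditive, i.e. S(x ∘_ρ y) ≤ S(x) ∘_σ S(y) for all x, y ∈ G_ρ. If S is bounded above on some nonempty open ball B_δ(a) ⊆ G_ρ (δ > 0), then S is locally bounded on G_ρ: every point of G_ρ has a neighbourhood on which S is bounded (above and below). -/
/-- Translation lemma: if `S` is bounded above on an open ball inside `G_ρ`,
then it is bounded above (with positivity of the argument) on a ball around any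
point of `G_ρ`. -/
lemma popa_translate_bound (ρ σ : ℝ) (hρ : 0 ≤ ρ) (hσ : 0 ≤ σ)
    (S : ℝ → ℝ)
    (hmap : ∀ x : ℝ, 0 < 1 + ρ * x → 0 < 1 + σ * S x)
    (hsub : ∀ x y : ℝ, 0 < 1 + ρ * x → 0 < 1 + ρ * y →
      S (x + y + ρ * x * y) ≤ S x + S y + σ * S x * S y)
    (a δ M : ℝ) (hδ : 0 < δ)
    (hpos : ∀ x ∈ Set.Ioo (a - δ) (a + δ), 0 < 1 + ρ * x)
    (hM : ∀ x ∈ Set.Ioo (a - δ) (a + δ), S x ≤ M)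
    (p : ℝ) (hp : 0 < 1 + ρ * p) :
    ∃ ε > (0 : ℝ), ∃ C : ℝ, ∀ y ∈ Set.Ioo (p - ε) (p + ε),
      (0 < 1 + ρ * y) ∧ S y ≤ C := by
  have ha : 0 < 1 + ρ * a := hpos a ⟨by linarith, by linarith⟩
  have ha' : (1 + ρ * a) ≠ 0 := ne_of_gt ha
  set c : ℝ := (p - a) / (1 + ρ * a) with hc_def
  have hc : 0 < 1 + ρ * c := by
    have : 1 + ρ * c = (1 + ρ * p) / (1 + ρ * a) := by
      field_simp [hc_def]
      linear_combination ρ * (1 + ρ * a) * hc_def + ρ * div_mul_cancel₀ (p - a) ha'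
    rw [this]; positivity
  have hc' : (1 + ρ * c) ≠ 0 := ne_of_gt hc
  have hσc : 0 < 1 + σ * S c := hmap c hc
  refine ⟨δ * (1 + ρ * c), by positivity, M + S c + σ * M * S c, ?_⟩
  intro y hy
  obtain ⟨hy1, hy2⟩ := hy
  set u : ℝ := a + (y - p) / (1 + ρ * c) with hu_def
  have hub : u ∈ Set.Ioo (a - δ) (a + δ) := by
    constructor
    · have : -δ < (y - p) / (1 + ρ * c) := by
        rw [lt_div_iff₀ hc]; nlinarith
      simp only [hu_def]; linarith
    · have : (y - p) / (1 + ρ * c) < δ := by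
        rw [div_lt_iff₀ hc]; nlinarith
      simp only [hu_def]; linarith
  have hu : 0 < 1 + ρ * u := hpos u hub
  have hcomp : u + c + ρ * u * c = y := by
    have hp_eq : a * (1 + ρ * c) + c = p := by
      field_simp [hc_def]; linear_combination (1 + ρ * a) * hc_def + div_mul_cancel₀ (p - a) ha'
    have : u * (1 + ρ * c) + c = y := by
      rw [hu_def]; field_simp; nlinarith [hp_eq]
    nlinarith [this]
  have hsy : S y ≤ S u + S c + σ * S u * S c := by
    have := hsub u c hu hc
    rwa [hcomp] at this
  have hSu : S u ≤ M := hM u hub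
  constructor
  · have : 1 + ρ * y = (1 + ρ * u) * (1 + ρ * c) := by
      rw [← hcomp]; ring
    rw [this]; positivity
  · nlinarith [mul_le_mul_of_nonneg_right hSu (le_of_lt hσc)]

/-- **Prop. 5(i).** For `ρ, σ ≥ 0`, a subadditive map
`S : (G_ρ, ∘_ρ) → (G_σ, ∘_σ)` (i.e. `S(x ∘_ρ y) ≤ S(x) ∘_σ S(y)`, both sides in
`G_σ`) which is bounded above on some open ball `B_δ(a) ⊆ G_ρ` is locally
bounded on `G_ρ`: each point of `G_ρ` has a neighbourhood on which `S` is
bounded above and below. -/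
theorem popa_subadditive_locally_bounded (ρ σ : ℝ) (hρ : 0 ≤ ρ) (hσ : 0 ≤ σ)
    (S : ℝ → ℝ)
    (hmap : ∀ x : ℝ, 0 < 1 + ρ * x → 0 < 1 + σ * S x)
    (hsub : ∀ x y : ℝ, 0 < 1 + ρ * x → 0 < 1 + ρ * y →
      S (x + y + ρ * x * y) ≤ S x + S y + σ * S x * S y)
    (hbdd : ∃ a δ M : ℝ, 0 < δ ∧
      (∀ x ∈ Set.Ioo (a - δ) (a + δ), 0 < 1 + ρ * x) ∧
      ∀ x ∈ Set.Ioo (a - δ) (a + δ), S x ≤ M) :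
    ∀ x : ℝ, 0 < 1 + ρ * x → ∃ ε > (0 : ℝ),
      (∀ y ∈ Set.Ioo (x - ε) (x + ε), 0 < 1 + ρ * y) ∧
      ∃ m M : ℝ, ∀ y ∈ Set.Ioo (x - ε) (x + ε), m ≤ S y ∧ S y ≤ M := by
  obtain ⟨a, δ, M, hδ, hpos, hM⟩ := hbdd
  intro x hx
  obtain ⟨ε₁, hε₁, C₁, hC₁⟩ :=
    popa_translate_bound ρ σ hρ hσ S hmap hsub a δ M hδ hpos hM x hx
  obtain ⟨ε₀, hε₀, C₀, hC₀⟩ :=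
    popa_translate_bound ρ σ hρ hσ S hmap hsub a δ M hδ hpos hM 0 (by norm_num)
  have h0ball : (0 : ℝ) ∈ Set.Ioo (0 - ε₀) (0 + ε₀) := ⟨by linarith, by linarith⟩
  have hS0 : 0 < 1 + σ * S 0 := hmap 0 (by norm_num)
  have hC0pos : 0 < 1 + σ * C₀ := by
    have h1 := (hC₀ 0 h0ball).2
    nlinarith
  set ε : ℝ := min ε₁ (min (ε₀ * (1 + ρ * x) / 4) ((1 + ρ * x) / (2 * (ρ + 1))))
    with hε_def
  have hεpos : 0 < ε := by
    apply lt_min hε₁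
    apply lt_min <;> positivity
  have hεle1 : ε ≤ ε₁ := min_le_left _ _
  have hεle2 : ε ≤ ε₀ * (1 + ρ * x) / 4 := le_trans (min_le_right _ _) (min_le_left _ _)
  have hεle3 : ε ≤ (1 + ρ * x) / (2 * (ρ + 1)) :=
    le_trans (min_le_right _ _) (min_le_right _ _)
  -- the key consequence: ρ * ε < (1 + ρ*x)/2
  have hρε : ρ * ε < (1 + ρ * x) / 2 := by
    have h1 : ρ * ε ≤ ρ * ((1 + ρ * x) / (2 * (ρ + 1))) :=
      mul_le_mul_of_nonneg_left hεle3 hρ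
    have h2 : ρ * ((1 + ρ * x) / (2 * (ρ + 1))) < (1 + ρ * x) / 2 := by
      rw [← mul_div_assoc, div_lt_div_iff₀ (by positivity) (by norm_num)]
      nlinarith
    linarith
  refine ⟨ε, hεpos, ?_, (S x - C₀) / (1 + σ * C₀), C₁, ?_⟩
  · intro y ⟨hyl, hyr⟩
    nlinarith [mul_le_mul_of_nonneg_left (le_of_lt (show x - y < ε by linarith)) hρ]
  · intro y ⟨hyl, hyr⟩
    have hy1 : (1 + ρ * x) / 2 < 1 + ρ * y := by
      nlinarith [mul_le_mul_of_nonneg_left (le_of_lt (show x - y < ε by linarith)) hρ]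
    have hy : 0 < 1 + ρ * y := by linarith
    have hy' : (1 + ρ * y) ≠ 0 := ne_of_gt hy
    -- upper bound
    have hupper : S y ≤ C₁ :=
      (hC₁ y ⟨by linarith, by linarith⟩).2
    refine ⟨?_, hupper⟩
    -- lower bound
    set w : ℝ := (x - y) / (1 + ρ * y) with hw_def
    have hwball : w ∈ Set.Ioo ((0:ℝ) - ε₀) (0 + ε₀) := by
      constructor
      · rw [hw_def, lt_div_iff₀ hy]
        nlinarith [mul_lt_mul_of_pos_left hy1 hε₀]
      · rw [hw_def, div_lt_iff₀ hy]
        nlinarith [mul_lt_mul_of_pos_left hy1 hε₀]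
    have hw : 0 < 1 + ρ * w := by
      have : 1 + ρ * w = (1 + ρ * x) / (1 + ρ * y) := by
        rw [hw_def]; field_simp; ring
      rw [this]; positivity
    have hcomp : y + w + ρ * y * w = x := by
      rw [hw_def]; linear_combination div_mul_cancel₀ (x - y) hy'
    have hkey : S x ≤ S y + S w + σ * S y * S w := by
      have := hsub y w hy hw
      rwa [hcomp] at this
    have hSw : S w ≤ C₀ := (hC₀ w hwball).2
    have hσy : 0 < 1 + σ * S y := hmap y hy
    rw [div_le_iff₀ hC0pos]
    nlinarith [mul_nonneg (by linarith : (0:ℝ) ≤ C₀ - S w) (le_of_lt hσy)]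
end

section
/- Let ρ, σ ≥ 0 and let S : G_ρ → G_σ be subadditive with S(0) = 0. If S is locally bounded (bounded on a neighbourhood of each point of G_ρ), then liminf_{t → 0} S(t) ≥ 0. -/
open Filter Topology
set_option maxHeartbeats 1000000

/-- **Prop. 5(ii).** For `ρ, σ ≥ 0`, a subadditive map
`S : (G_ρ, ∘_ρ) → (G_σ, ∘_σ)` with `S(0) = 0` which is locally bounded on `G_ρ`
satisfies `liminf_{t → 0} S(t) ≥ 0`. -/
theorem popa_subadditive_liminf (ρ σ : ℝ) (hρ : 0 ≤ ρ) (hσ : 0 ≤ σ)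
    (S : ℝ → ℝ) (hS0 : S 0 = 0)
    (hmap : ∀ x : ℝ, 0 < 1 + ρ * x → 0 < 1 + σ * S x)
    (hsub : ∀ x y : ℝ, 0 < 1 + ρ * x → 0 < 1 + ρ * y →
      S (x + y + ρ * x * y) ≤ S x + S y + σ * S x * S y)
    (hloc : ∀ x : ℝ, 0 < 1 + ρ * x → ∃ ε > (0 : ℝ), ∃ m M : ℝ,
      ∀ y ∈ Set.Ioo (x - ε) (x + ε), m ≤ S y ∧ S y ≤ M) :
    0 ≤ Filter.liminf S (𝓝[≠] (0 : ℝ)) := by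
  set l := 𝓝[≠] (0 : ℝ) with hl
  obtain ⟨ε, hε, m, M, hbd⟩ := hloc 0 (by norm_num)
  have h0mem : (0 : ℝ) ∈ Set.Ioo (0 - ε) (0 + ε) := by
    constructor <;> simp [hε] <;> linarith
  have hM0 : 0 ≤ M := by have := (hbd 0 h0mem).2; rw [hS0] at this; exact this
  have hIoo_nhds : Set.Ioo (0 - ε) (0 + ε) ∈ 𝓝 (0 : ℝ) :=
    Ioo_mem_nhds (by linarith) (by linarith)
  -- eventual membership in the bounded neighbourhood
  have hev : ∀ᶠ t in l, t ∈ Set.Ioo (0 - ε) (0 + ε) :=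
    eventually_nhdsWithin_of_eventually_nhds hIoo_nhds
  have hub : ∀ᶠ t in l, S t ≤ M := hev.mono fun t ht => (hbd t ht).2
  have hlb : ∀ᶠ t in l, m ≤ S t := hev.mono fun t ht => (hbd t ht).1
  -- eventually in the Popa group
  have hcont : Tendsto (fun t : ℝ => 1 + ρ * t) (𝓝 0) (𝓝 1) := by
    have : Continuous (fun t : ℝ => 1 + ρ * t) := by continuity
    simpa using this.tendsto 0
  have hGnhds : ∀ᶠ t in 𝓝 (0:ℝ), 0 < 1 + ρ * t := hcont.eventually_const_lt one_pos
  have hG : ∀ᶠ t in l, 0 < 1 + ρ * t :=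
    eventually_nhdsWithin_of_eventually_nhds hGnhds
  -- the inverse map t ↦ -t/(1+ρt)
  have hinv_tendsto : Tendsto (fun t : ℝ => -t / (1 + ρ * t)) (𝓝 0) (𝓝 0) := by
    have h1 : Tendsto (fun t : ℝ => -t) (𝓝 (0:ℝ)) (𝓝 (0:ℝ)) := by
      simpa using (continuous_neg.tendsto (0:ℝ))
    have := h1.div hcont one_ne_zero
    rw [zero_div] at this; exact this
  have hinv_mem : ∀ᶠ t in l, (-t / (1 + ρ * t)) ∈ Set.Ioo (0 - ε) (0 + ε) :=
    eventually_nhdsWithin_of_eventually_nhds (hinv_tendsto.eventually hIoo_nhds)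
  set c0 : ℝ := -M / (1 + σ * M) with hc0
  have hσM : 0 < 1 + σ * M := by nlinarith
  -- lower bound c0 ≤ S t eventually
  have hclb : ∀ᶠ t in l, c0 ≤ S t := by
    filter_upwards [hG, hinv_mem] with t hGt hMem
    set t' : ℝ := -t / (1 + ρ * t) with ht'
    have hGt' : 0 < 1 + ρ * t' := by
      have : 1 + ρ * t' = 1 / (1 + ρ * t) := by
        rw [ht']; field_simp; ring
      rw [this]; positivity
    have hsum : t + t' + ρ * t * t' = 0 := by
      rw [ht']; linear_combination (-t) * (mul_inv_cancel₀ hGt.ne')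
    have h := hsub t t' hGt hGt'
    rw [hsum, hS0] at h
    have hMt' : S t' ≤ M := (hbd t' hMem).2
    have hσSt : 0 < 1 + σ * S t := hmap t hGt
    -- 0 ≤ S t + S t' (1 + σ S t) ≤ S t (1 + σ M) + M
    rw [hc0, div_le_iff₀ hσM] at *
    nlinarith
  have hbdd_below : l.IsBoundedUnder (· ≥ ·) S := ⟨c0, hclb⟩
  have hcobdd : l.IsCoboundedUnder (· ≥ ·) S :=
    isCoboundedUnder_ge_of_eventually_le l hub
  set L : ℝ := liminf S l with hL
  have hc0L : c0 ≤ L := le_liminf_of_le hcobdd hclb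
  by_contra hcon
  push_neg at hcon
  have hLneg : L < 0 := hcon
  have hσL : 0 < 1 + σ * L := by
    have h1 : 1 + σ * c0 = 1 / (1 + σ * M) := by rw [hc0]; field_simp; ring
    have h2 : 0 < 1 + σ * c0 := by rw [h1]; positivity
    nlinarith
  -- the doubling map
  set φ : ℝ → ℝ := fun t => t + t + ρ * t * t with hφ
  have hφ_tendsto : Tendsto φ l l := by
    rw [hl, tendsto_nhdsWithin_iff]
    constructor
    · apply Tendsto.mono_left _ nhdsWithin_le_nhds
      have hc : Continuous φ := by
        rw [hφ]
        exact (continuous_id.add continuous_id).add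
          ((continuous_const.mul continuous_id).mul continuous_id)
      have h := hc.tendsto 0
      simpa [hφ] using h
    · have h2 : ∀ᶠ t in 𝓝 (0:ℝ), 0 < 2 + ρ * t := by
        have hc2 : Tendsto (fun t : ℝ => 2 + ρ * t) (𝓝 0) (𝓝 2) := by
          have : Continuous (fun t : ℝ => 2 + ρ * t) := by continuity
          simpa using this.tendsto 0
        exact hc2.eventually_const_lt two_pos
      filter_upwards [eventually_nhdsWithin_of_eventually_nhds h2,
        self_mem_nhdsWithin] with t h2t htne
      have htne' : t ≠ 0 := htne
      have : φ t = t * (2 + ρ * t) := by rw [hφ]; ring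
      simp only [Set.mem_compl_iff, Set.mem_singleton_iff]
      rw [this]
      exact mul_ne_zero htne' (ne_of_gt h2t)
  -- key estimate: for each δ > 0, L ≤ 2(L+δ) + σ(L+δ)²
  have hkey : ∀ δ : ℝ, 0 < δ → L ≤ 2 * (L + δ) + σ * (L + δ) ^ 2 := by
    intro δ hδ
    have hfreq : ∃ᶠ t in l, S t < L + δ :=
      frequently_lt_of_liminf_lt hcobdd (by rw [← hL]; linarith)
    have hev2 : ∀ᶠ t in l, S (φ t) ≤ S t + S t + σ * S t * S t ∧ c0 ≤ S t := by
      filter_upwards [hG, hclb] with t hGt hct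
      exact ⟨hsub t t hGt hGt, hct⟩
    have hfreq2 : ∃ᶠ t in l, S (φ t) ≤ 2 * (L + δ) + σ * (L + δ) ^ 2 := by
      apply (hfreq.and_eventually hev2).mono
      rintro t ⟨hlt, hsubt, hct⟩
      have h1 : 1 + σ * c0 = 1 / (1 + σ * M) := by rw [hc0]; field_simp; ring
      have h2 : 0 < 1 + σ * c0 := by rw [h1]; positivity
      have hLd : c0 ≤ L + δ := by linarith
      have h3 : 0 < 2 + σ * (S t + (L + δ)) := by
        nlinarith [mul_le_mul_of_nonneg_left hct hσ, mul_le_mul_of_nonneg_left hLd hσ]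
      have h4 : 0 ≤ ((L + δ) - S t) * (2 + σ * (S t + (L + δ))) :=
        mul_nonneg (by linarith) h3.le
      nlinarith [h4]
    have hbφ : l.IsBoundedUnder (· ≥ ·) (S ∘ φ) :=
      ⟨c0, hφ_tendsto.eventually hclb⟩
    have step1 : L ≤ liminf (S ∘ φ) l := by
      rw [liminf_comp]
      exact liminf_le_liminf_of_le hφ_tendsto hbdd_below
        (isCoboundedUnder_ge_of_eventually_le _
          ((hφ_tendsto.eventually hub : ∀ᶠ t in l, S (φ t) ≤ M)))
    have step2 : liminf (S ∘ φ) l ≤ 2 * (L + δ) + σ * (L + δ) ^ 2 :=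
      liminf_le_of_frequently_le hfreq2 hbφ
    linarith
  -- choose a small δ to get a contradiction
  set A : ℝ := L + σ * L ^ 2 with hA
  have hAneg : A < 0 := by nlinarith
  set B : ℝ := 2 + 2 * σ * L with hB
  have hBpos : 0 < B := by nlinarith
  set δ : ℝ := min 1 (-A / (2 * (B + σ))) with hδdef
  have hδpos : 0 < δ := by
    apply lt_min one_pos
    apply div_pos (by linarith) (by linarith)
  have h := hkey δ hδpos
  have hδ1 : δ ≤ 1 := min_le_left _ _
  have hδ2 : δ ≤ -A / (2 * (B + σ)) := min_le_right _ _
  have hδ2' : δ * (2 * (B + σ)) ≤ -A := by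
    rw [div_eq_mul_inv] at hδ2
    have hBσ : 0 < 2 * (B + σ) := by linarith
    calc δ * (2 * (B + σ)) ≤ (-A * (2 * (B + σ))⁻¹) * (2 * (B + σ)) := by
          apply mul_le_mul_of_nonneg_right hδ2 (le_of_lt hBσ)
      _ = -A := by field_simp
  nlinarith [sq_nonneg δ, mul_pos hδpos hBpos]
end

section
/- Let ρ, σ ≥ 0 and let S : G_ρ → G_σ be subadditive with S(0) = 0 and with right-limit zero at 0, i.e. S(t) → 0 as t ↓ 0. Then S is continuous at 0 if and only if there exists a sequence z_n < 0 with z_n ↑ 0 and S(z_n) → 0; and if S is continuous at 0 (and finite-valued), then S is continuous at every point of G_ρ. -/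
open Filter Topology

/-- Continuity at every point, given continuity at `0`. -/
lemma popa_aux_global (ρ σ : ℝ) (hρ : 0 ≤ ρ) (hσ : 0 ≤ σ)
    (S : ℝ → ℝ) (hS0 : S 0 = 0)
    (hmap : ∀ x : ℝ, 0 < 1 + ρ * x → 0 < 1 + σ * S x)
    (hsub : ∀ x y : ℝ, 0 < 1 + ρ * x → 0 < 1 + ρ * y →
      S (x + y + ρ * x * y) ≤ S x + S y + σ * S x * S y)
    (hc : ContinuousAt S 0) : ∀ x : ℝ, 0 < 1 + ρ * x → ContinuousAt S x := by
  intro x hx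
  have hxne : (1 + ρ * x) ≠ 0 := ne_of_gt hx
  have hc0 : Tendsto S (𝓝 0) (𝓝 0) := by
    have := hc.tendsto; rwa [hS0] at this
  have hcont_h : Tendsto (fun y => (y - x) / (1 + ρ * x)) (𝓝 x) (𝓝 0) := by
    have h1 : Tendsto (fun y : ℝ => (y - x) / (1 + ρ * x)) (𝓝 x)
        (𝓝 ((x - x) / (1 + ρ * x))) :=
      ((continuous_id.sub continuous_const).div_const _).tendsto x
    simpa using h1
  have hcont_1ρ : Tendsto (fun y : ℝ => 1 + ρ * y) (𝓝 x) (𝓝 (1 + ρ * x)) :=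
    (continuous_const.add (continuous_const.mul continuous_id)).tendsto x
  have hcont_g : Tendsto (fun y => (x - y) / (1 + ρ * y)) (𝓝 x) (𝓝 0) := by
    have h1 : Tendsto (fun y : ℝ => x - y) (𝓝 x) (𝓝 (x - x)) :=
      (continuous_const.sub continuous_id).tendsto x
    have := h1.div hcont_1ρ hxne
    simp only [sub_self, zero_div] at this; exact this
  have E1 : ∀ᶠ y in 𝓝 x, 0 < 1 + ρ * y := hcont_1ρ.eventually (lt_mem_nhds hx)
  have E2 : ∀ᶠ y in 𝓝 x, 0 < 1 + ρ * ((y - x) / (1 + ρ * x)) := by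
    have h3 : Tendsto (fun y => 1 + ρ * ((y - x) / (1 + ρ * x))) (𝓝 x) (𝓝 1) := by
      have := (hcont_h.const_mul ρ).const_add 1
      simpa using this
    exact h3.eventually (lt_mem_nhds one_pos)
  -- upper bound
  have Eup : ∀ᶠ y in 𝓝 x, S y ≤ S x + S ((y - x) / (1 + ρ * x)) +
      σ * S x * S ((y - x) / (1 + ρ * x)) := by
    filter_upwards [E2] with y hy
    have := hsub x ((y - x) / (1 + ρ * x)) hx hy
    have hxy : x + (y - x) / (1 + ρ * x) + ρ * x * ((y - x) / (1 + ρ * x)) = y := by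
      calc x + (y - x) / (1 + ρ * x) + ρ * x * ((y - x) / (1 + ρ * x))
          = x + (y - x) * (1 + ρ * x) / (1 + ρ * x) := by ring
        _ = y := by rw [mul_div_cancel_right₀ _ hxne]; ring
    rwa [hxy] at this
  -- lower bound
  have Elow : ∀ᶠ y in 𝓝 x, (S x - S ((x - y) / (1 + ρ * y))) /
      (1 + σ * S ((x - y) / (1 + ρ * y))) ≤ S y := by
    filter_upwards [E1] with y hy
    set g := (x - y) / (1 + ρ * y) with hg
    have hyne : (1 + ρ * y) ≠ 0 := ne_of_gt hy
    have hgin : 0 < 1 + ρ * g := by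
      have : 1 + ρ * g = (1 + ρ * x) / (1 + ρ * y) := by
        rw [hg]; field_simp; ring
      rw [this]; exact div_pos hx hy
    have hsg : 0 < 1 + σ * S g := hmap g hgin
    have hle := hsub y g hy hgin
    have hyx : y + g + ρ * y * g = x := by
      rw [hg]
      calc y + (x - y) / (1 + ρ * y) + ρ * y * ((x - y) / (1 + ρ * y))
          = y + (x - y) * (1 + ρ * y) / (1 + ρ * y) := by ring
        _ = x := by rw [mul_div_cancel_right₀ _ hyne]; ring
    rw [hyx] at hle
    rw [div_le_iff₀ hsg]
    nlinarith [hle]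
  -- limits of the bounds
  have hcomp : Tendsto (fun y => S ((y - x) / (1 + ρ * x))) (𝓝 x) (𝓝 0) :=
    hc0.comp hcont_h
  have hU : Tendsto (fun y => S x + S ((y - x) / (1 + ρ * x)) +
      σ * S x * S ((y - x) / (1 + ρ * x))) (𝓝 x) (𝓝 (S x)) := by
    have h1 : Tendsto (fun _ : ℝ => S x) (𝓝 x) (𝓝 (S x)) := tendsto_const_nhds
    have := (h1.add hcomp).add (hcomp.const_mul (σ * S x))
    simpa [mul_comm] using this
  have hL : Tendsto (fun y => (S x - S ((x - y) / (1 + ρ * y))) /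
      (1 + σ * S ((x - y) / (1 + ρ * y)))) (𝓝 x) (𝓝 (S x)) := by
    have hcomp' : Tendsto (fun y => S ((x - y) / (1 + ρ * y))) (𝓝 x) (𝓝 0) :=
      hc0.comp hcont_g
    have h1 : Tendsto (fun _ : ℝ => S x) (𝓝 x) (𝓝 (S x)) := tendsto_const_nhds
    have hnum : Tendsto (fun y => S x - S ((x - y) / (1 + ρ * y))) (𝓝 x) (𝓝 (S x)) := by
      have := h1.sub hcomp'; simpa using this
    have hden : Tendsto (fun y => 1 + σ * S ((x - y) / (1 + ρ * y))) (𝓝 x) (𝓝 1) := by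
      have := (hcomp'.const_mul σ).const_add 1; simpa using this
    have := hnum.div hden one_ne_zero
    simp only [div_one] at this; exact this
  exact tendsto_of_tendsto_of_tendsto_of_le_of_le' hL hU Elow Eup

set_option maxHeartbeats 1000000 in
/-- **Theorem G1.** For `ρ, σ ≥ 0`, let `S : (G_ρ, ∘_ρ) → (G_σ, ∘_σ)`
be subadditive with `S(0) = 0` and `S(t) → 0` as `t ↓ 0`. Then `S` is continuous
at `0` iff there is a sequence `z_n < 0`, `z_n ↑ 0`, with `S(z_n) → 0`; and if
`S` is continuous at `0` then it is continuous at every point of `G_ρ`. -/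
theorem popa_subadditive_continuity_criterion (ρ σ : ℝ) (hρ : 0 ≤ ρ) (hσ : 0 ≤ σ)
    (S : ℝ → ℝ) (hS0 : S 0 = 0)
    (hmap : ∀ x : ℝ, 0 < 1 + ρ * x → 0 < 1 + σ * S x)
    (hsub : ∀ x y : ℝ, 0 < 1 + ρ * x → 0 < 1 + ρ * y →
      S (x + y + ρ * x * y) ≤ S x + S y + σ * S x * S y)
    (hright : Tendsto S (𝓝[>] (0 : ℝ)) (𝓝 0)) :
    (ContinuousAt S 0 ↔
      ∃ z : ℕ → ℝ, (∀ n, z n < 0) ∧ Monotone z ∧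
        Tendsto z atTop (𝓝 0) ∧ Tendsto (fun n => S (z n)) atTop (𝓝 0)) ∧
    (ContinuousAt S 0 → ∀ x : ℝ, 0 < 1 + ρ * x → ContinuousAt S x) := by
  have hρ1 : (0:ℝ) < ρ + 1 := by linarith
  constructor
  · constructor
    · -- forward: take z n = -(1/(n+1))
      intro hc
      refine ⟨fun n => -(1 / (n + 1 : ℝ)), fun n => neg_lt_zero.mpr (by positivity), ?_, ?_, ?_⟩
      · intro n m hnm
        simp only [neg_le_neg_iff]
        apply one_div_le_one_div_of_le
        · positivity
        · have : (n:ℝ) ≤ m := Nat.cast_le.mpr hnm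
          linarith
      · simpa using (tendsto_one_div_add_atTop_nhds_zero_nat : Tendsto (fun n : ℕ => 1 / ((n : ℝ) + 1)) atTop (𝓝 0)).neg
      · have hz : Tendsto (fun n : ℕ => -(1 / (n + 1 : ℝ))) atTop (𝓝 0) := by
          simpa using (tendsto_one_div_add_atTop_nhds_zero_nat : Tendsto (fun n : ℕ => 1 / ((n : ℝ) + 1)) atTop (𝓝 0)).neg
        have := hc.tendsto.comp hz
        rwa [hS0] at this
    · -- backward: the hard direction
      rintro ⟨z, hzneg, _, hz0, hSz0⟩
      rw [Metric.continuousAt_iff]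
      intro ε hε
      have h3σ : (0:ℝ) < 3 + σ := by linarith
      set ε₂ := min 1 (ε / (3 + σ)) with hε₂def
      have hε₂pos : 0 < ε₂ := lt_min one_pos (by positivity)
      have hε₂1 : ε₂ ≤ 1 := min_le_left _ _
      have hε₂ε : (2 + σ) * ε₂ < ε := by
        have h1 : ε₂ ≤ ε / (3 + σ) := min_le_right _ _
        have h2 : (2 + σ) * (ε / (3 + σ)) < ε := by
          rw [mul_comm, div_mul_eq_mul_div, div_lt_iff₀ h3σ]
          nlinarith
        nlinarith
      have hε₂ltε : ε₂ < ε := by nlinarith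
      -- δ₁ from the right limit
      obtain ⟨δ₁, hδ₁pos, hδ₁⟩ := (Metric.tendsto_nhdsWithin_nhds.mp hright) ε₂ hε₂pos
      -- pick a suitable n
      have hm : (0:ℝ) < min (δ₁ / (ρ + 1)) (1 / (ρ + 1)) := by positivity
      have h1 : ∀ᶠ n in atTop, -(min (δ₁ / (ρ + 1)) (1 / (ρ + 1))) < z n :=
        hz0.eventually (lt_mem_nhds (by linarith))
      have h2 : ∀ᶠ n in atTop, |S (z n)| < ε₂ := by
        obtain ⟨N, hN⟩ := Metric.tendsto_atTop.mp hSz0 ε₂ hε₂pos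
        filter_upwards [eventually_ge_atTop N] with n hn
        simpa [Real.dist_eq] using hN n hn
      obtain ⟨n, hn1, hn2⟩ := (h1.and h2).exists
      set w := z n with hw
      have hwneg : w < 0 := hzneg n
      have hw1 : -w < 1 / (ρ + 1) :=
        lt_of_lt_of_le (by linarith [hn1]) (min_le_right (δ₁ / (ρ + 1)) (1 / (ρ + 1)))
      have hwδ : -w < δ₁ / (ρ + 1) :=
        lt_of_lt_of_le (by linarith [hn1]) (min_le_left (δ₁ / (ρ + 1)) (1 / (ρ + 1)))
      have hw1' : (-w) * (ρ + 1) < 1 := (lt_div_iff₀ hρ1).mp hw1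
      have hwδ' : (-w) * (ρ + 1) < δ₁ := (lt_div_iff₀ hρ1).mp hwδ
      have hρw : 0 < 1 + ρ * w := by nlinarith
      have hSw : |S w| < ε₂ := hn2
      refine ⟨min (-w) δ₁, lt_min (by linarith) hδ₁pos, ?_⟩
      intro h hdist
      rw [Real.dist_eq, sub_zero] at hdist
      rw [Real.dist_eq, hS0, sub_zero]
      rcases lt_trichotomy h 0 with hneg | h0 | hpos
      · -- h < 0 : the key case
        have habs : |h| = -h := abs_of_neg hneg
        have hhw : w < h := by
          have := lt_of_lt_of_le hdist (min_le_left (-w) δ₁)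
          rw [habs] at this; linarith
        have hmono : (-h) * (ρ + 1) < (-w) * (ρ + 1) :=
          mul_lt_mul_of_pos_right (by linarith) hρ1
        have hh1' : (-h) * (ρ + 1) < 1 := lt_trans hmono hw1'
        have hhδ' : (-h) * (ρ + 1) < δ₁ := lt_trans hmono hwδ'
        have hρh : 0 < 1 + ρ * h := by nlinarith
        rw [abs_lt]
        constructor
        · -- lower bound: -ε < S h, via 0 = S(h ∘ g), g = -h/(1+ρh)
          set g := (-h) / (1 + ρ * h) with hg
          have hgpos : 0 < g := div_pos (by linarith) hρh
          have hgδ : g < δ₁ := by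
            rw [hg, div_lt_iff₀ hρh]
            have A : (-h) * (ρ + 1) * (1 + ρ * h) < δ₁ * (1 + ρ * h) :=
              mul_lt_mul_of_pos_right hhδ' hρh
            have B : 0 ≤ ρ * (1 - (-h) * (ρ + 1)) * (-h) :=
              mul_nonneg (mul_nonneg hρ (by linarith)) (by linarith)
            nlinarith [A, B]
          have hSg : |S g| < ε₂ := by
            have hd : dist g 0 < δ₁ := by
              rw [Real.dist_eq, sub_zero, abs_of_pos hgpos]; exact hgδ
            simpa [Real.dist_eq] using hδ₁ (Set.mem_Ioi.mpr hgpos) hd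
          have hρg : 0 < 1 + ρ * g := by
            have : 1 + ρ * g = 1 / (1 + ρ * h) := by
              rw [hg]; field_simp
              ring
            rw [this]; positivity
          have hmapg : 0 < 1 + σ * S g := hmap g hρg
          have hkey := hsub h g hρh hρg
          have hzero : h + g + ρ * h * g = 0 := by
            rw [hg]
            calc h + -h / (1 + ρ * h) + ρ * h * (-h / (1 + ρ * h))
                = h + (-h) * (1 + ρ * h) / (1 + ρ * h) := by ring
              _ = 0 := by rw [mul_div_cancel_right₀ _ hρh.ne']; ring
          rw [hzero, hS0] at hkey
          by_contra hcon
          push_neg at hcon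
          have hcon' : S h ≤ -ε := by linarith
          have e2 : S h * (1 + σ * S g) ≤ (-ε) * (1 + σ * S g) :=
            mul_le_mul_of_nonneg_right hcon' hmapg.le
          have e3 : ε * (1 + σ * S g) ≤ S g := by nlinarith [hkey, e2]
          have hSgpos : 0 < S g := lt_of_lt_of_le (mul_pos hε hmapg) e3
          have : ε ≤ S g := by nlinarith [mul_nonneg (mul_nonneg hε.le hσ) hSgpos.le]
          have := (abs_lt.mp hSg).2
          linarith
        · -- upper bound: S h < ε, via h = w ∘ t, t = (h-w)/(1+ρw)
          set t := (h - w) / (1 + ρ * w) with ht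
          have htpos : 0 < t := div_pos (by linarith) hρw
          have htδ : t < δ₁ := by
            rw [ht, div_lt_iff₀ hρw]
            have A : (-w) * (ρ + 1) * (1 + ρ * w) < δ₁ * (1 + ρ * w) :=
              mul_lt_mul_of_pos_right hwδ' hρw
            have B : 0 ≤ ρ * (1 - (-w) * (ρ + 1)) * (-w) :=
              mul_nonneg (mul_nonneg hρ (by linarith)) (by linarith)
            have C : h - w < -w := by linarith
            nlinarith [A, B, C]
          have hSt : |S t| < ε₂ := by
            have hd : dist t 0 < δ₁ := by
              rw [Real.dist_eq, sub_zero, abs_of_pos htpos]; exact htδ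
            simpa [Real.dist_eq] using hδ₁ (Set.mem_Ioi.mpr htpos) hd
          have hρt : 0 < 1 + ρ * t := by nlinarith [mul_nonneg hρ htpos.le]
          have hkey := hsub w t hρw hρt
          have heq : w + t + ρ * w * t = h := by
            rw [ht]
            calc w + (h - w) / (1 + ρ * w) + ρ * w * ((h - w) / (1 + ρ * w))
                = w + (h - w) * (1 + ρ * w) / (1 + ρ * w) := by ring
              _ = h := by rw [mul_div_cancel_right₀ _ hρw.ne']; ring
          rw [heq] at hkey
          obtain ⟨a1, a2⟩ := abs_lt.mp hSw
          obtain ⟨b1, b2⟩ := abs_lt.mp hSt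
          have hprod : S w * S t < ε₂ * ε₂ := by
            nlinarith [mul_pos (by linarith : (0:ℝ) < ε₂ - S w) (by linarith : (0:ℝ) < ε₂ + S t),
              mul_pos (by linarith : (0:ℝ) < ε₂ + S w) (by linarith : (0:ℝ) < ε₂ - S t)]
          have h4 : σ * (S w * S t) ≤ σ * (ε₂ * ε₂) := mul_le_mul_of_nonneg_left hprod.le hσ
          have h5' : ε₂ * ε₂ ≤ ε₂ := by
            nlinarith [mul_nonneg hε₂pos.le (by linarith : (0:ℝ) ≤ 1 - ε₂)]
          have h5 : σ * (ε₂ * ε₂) ≤ σ * ε₂ := mul_le_mul_of_nonneg_left h5' hσ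
          nlinarith
      · rw [h0, hS0]; simpa using hε
      · -- h > 0 : use the right limit directly
        have : |S h| < ε₂ := by
          have hd : dist h 0 < δ₁ := by
            rw [Real.dist_eq, sub_zero]
            exact lt_of_lt_of_le hdist (min_le_right _ _)
          simpa [Real.dist_eq] using hδ₁ (Set.mem_Ioi.mpr hpos) hd
        exact lt_trans this hε₂ltε
  · exact popa_aux_global ρ σ hρ hσ S hS0 hmap hsub
end

section
/- Let ρ, σ ≥ 0 and let S : G_ρ → G_σ be subadditive with S(0) = 0. Suppose Σ ⊆ G_ρ is a Lebesgue-measurable set, symmetric in the sense that u ∈ Σ implies −_ρ u := −u/(1 + ρ·u) ∈ Σ, containing 0, such that Σ ∩ (0, δ) has positive Lebesgue measure for every δ > 0, and such that the restriction of S to Σ is continuous at 0 (i.e. S(u) → 0 as u → 0 within Σ). Then S is continuous at 0, and hence continuous at every point of G_ρ. -/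
open Filter Topology MeasureTheory Pointwise

/-- **Popa–Steinhaus lemma.** If `A` is a measurable subset of `G_ρ` of positive
Lebesgue measure, then the set of Popa quotients `u ∘ρ v⁻¹` with `u, v ∈ A`
is a neighbourhood of `0`. -/
lemma popa_steinhaus (ρ : ℝ) (hρ : 0 ≤ ρ) (A : Set ℝ)
    (hA : MeasurableSet A) (hAG : ∀ x ∈ A, 0 < 1 + ρ * x) (hApos : 0 < volume A) :
    {x : ℝ | ∃ u ∈ A, ∃ v ∈ A,
      x = u + (-v / (1 + ρ * v)) + ρ * u * (-v / (1 + ρ * v))} ∈ 𝓝 (0 : ℝ) := by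
  rcases eq_or_lt_of_le hρ with hρ0 | hρpos
  · -- ρ = 0 : the set is A - A
    refine Filter.mem_of_superset
      (Measure.sub_mem_nhds_zero_of_addHaar_pos volume A hA hApos) ?_
    rintro x hx
    rcases Set.mem_sub.1 hx with ⟨u, hu, v, hv, rfl⟩
    exact ⟨u, hu, v, hv, by simp [← hρ0]; ring⟩
  · -- ρ > 0 : transport along x ↦ log (1 + ρ x)
    set ψ : ℝ → ℝ := fun y => (Real.exp y - 1) / ρ with hψ
    set φ : ℝ → ℝ := fun x => Real.log (1 + ρ * x) with hφ
    have hψφ : ∀ x : ℝ, 0 < 1 + ρ * x → ψ (φ x) = x := by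
      intro x hx
      simp only [hψ, hφ, Real.exp_log hx]
      field_simp; ring
    have hρψ : ∀ y : ℝ, 1 + ρ * ψ y = Real.exp y := by
      intro y; simp only [hψ]; field_simp; ring
    set B : Set ℝ := ψ ⁻¹' A with hB
    have hBmeas : MeasurableSet B :=
      hA.preimage (Continuous.measurable (by continuity))
    have hAB : A = ψ '' B := by
      apply Set.Subset.antisymm
      · intro a ha
        exact ⟨φ a, by simpa [hB, Set.mem_preimage, hψφ a (hAG a ha)] using ha,
          hψφ a (hAG a ha)⟩
      · rintro a ⟨b, hb, rfl⟩; exact hb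
    have hBpos : 0 < volume B := by
      rcases eq_or_lt_of_le (zero_le : 0 ≤ volume B) with h0 | h0
      · exfalso
        have : volume (ψ '' B) = 0 :=
          addHaar_image_eq_zero_of_differentiableOn_of_addHaar_eq_zero volume
            (Differentiable.differentiableOn (by fun_prop)) h0.symm
        rw [← hAB] at this
        exact hApos.ne' this
      · exact h0
    have hBB : B - B ∈ 𝓝 (0 : ℝ) :=
      Measure.sub_mem_nhds_zero_of_addHaar_pos volume B hBmeas hBpos
    have hφcont : ContinuousAt φ 0 := by
      have h1 : (1:ℝ) + ρ * 0 ≠ 0 := by norm_num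
      exact ContinuousAt.log (by fun_prop) h1
    have hφ0 : φ 0 = 0 := by simp [hφ]
    have hN1 : φ ⁻¹' (B - B) ∈ 𝓝 (0 : ℝ) := by
      have := hφcont.preimage_mem_nhds (by rw [hφ0]; exact hBB)
      exact this
    have hN2 : {x : ℝ | 0 < 1 + ρ * x} ∈ 𝓝 (0 : ℝ) := by
      have : IsOpen {x : ℝ | 0 < 1 + ρ * x} :=
        isOpen_lt continuous_const (by fun_prop)
      exact this.mem_nhds (by norm_num)
    refine Filter.mem_of_superset (Filter.inter_mem hN1 hN2) ?_
    rintro x ⟨hx1, hx2⟩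
    rcases Set.mem_sub.1 hx1 with ⟨b, hb, c, hc, hbc⟩
    refine ⟨ψ b, hb, ψ c, hc, ?_⟩
    set u := ψ b
    set v := ψ c
    have hu1 : 1 + ρ * u = Real.exp b := hρψ b
    have hv1 : 1 + ρ * v = Real.exp c := hρψ c
    have hv1' : (1:ℝ) + ρ * v ≠ 0 := by rw [hv1]; positivity
    have key : 1 + ρ * (u + (-v / (1 + ρ * v)) + ρ * u * (-v / (1 + ρ * v)))
        = (1 + ρ * u) / (1 + ρ * v) := by
      field_simp
      ring
    have key2 : (1 + ρ * u) / (1 + ρ * v) = 1 + ρ * x := by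
      rw [hu1, hv1, ← Real.exp_sub, hbc, hφ]
      exact Real.exp_log hx2
    have := key.trans key2
    have hx3 : ρ * (u + (-v / (1 + ρ * v)) + ρ * u * (-v / (1 + ρ * v))) = ρ * x := by
      linarith
    exact (mul_left_cancel₀ hρpos.ne' hx3).symm

set_option maxHeartbeats 1600000 in
/-- **Theorem G2.** For `ρ, σ ≥ 0`, let `S : (G_ρ, ∘_ρ) → (G_σ, ∘_σ)`
be subadditive with `S(0) = 0`. If `Sg ⊆ G_ρ` is a Lebesgue-measurable set,
symmetric under the Popa inverse `u ↦ -u/(1+ρ·u)`, containing `0`, with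
`Sg ∩ (0, δ)` of positive measure for every `δ > 0`, and `S → 0` at `0` within
`Sg`, then `S` is continuous at `0` and hence at every point of `G_ρ`. -/
theorem popa_subadditive_thinned_continuity (ρ σ : ℝ) (hρ : 0 ≤ ρ) (hσ : 0 ≤ σ)
    (S : ℝ → ℝ) (hS0 : S 0 = 0)
    (hmap : ∀ x : ℝ, 0 < 1 + ρ * x → 0 < 1 + σ * S x)
    (hsub : ∀ x y : ℝ, 0 < 1 + ρ * x → 0 < 1 + ρ * y →
      S (x + y + ρ * x * y) ≤ S x + S y + σ * S x * S y)
    (Sg : Set ℝ) (hSgG : Sg ⊆ {x : ℝ | 0 < 1 + ρ * x})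
    (hSgmeas : MeasurableSet Sg)
    (hSgsym : ∀ u ∈ Sg, -u / (1 + ρ * u) ∈ Sg)
    (hSg0 : (0 : ℝ) ∈ Sg)
    (hSgpos : ∀ δ > (0 : ℝ), 0 < volume (Sg ∩ Set.Ioo 0 δ))
    (hScont : Tendsto S (𝓝[Sg] (0 : ℝ)) (𝓝 0)) :
    ContinuousAt S 0 ∧ ∀ x : ℝ, 0 < 1 + ρ * x → ContinuousAt S x := by
  -- Step 1: continuity at 0
  have hcont0 : Tendsto S (𝓝 (0:ℝ)) (𝓝 0) := by
    rw [Metric.tendsto_nhds]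
    intro ε hε
    set η : ℝ := min (ε / 4) (1 / (σ + 1)) with hηdef
    have hηpos : 0 < η := lt_min (by linarith) (by positivity)
    have hηε : η ≤ ε / 4 := min_le_left _ _
    have hησ : σ * η ≤ 1 := by
      have h2 : η ≤ 1 / (σ + 1) := min_le_right _ _
      have h3 : 0 < σ + 1 := by linarith
      rw [le_div_iff₀ h3] at h2
      nlinarith
    obtain ⟨δ', hδ'pos, hδ'⟩ := Metric.tendsto_nhdsWithin_nhds.1 hScont η hηpos
    set A := Sg ∩ Set.Ioo 0 δ' with hAdef
    have hAmeas : MeasurableSet A := hSgmeas.inter measurableSet_Ioo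
    have hAG : ∀ x ∈ A, 0 < 1 + ρ * x := fun x hx => hSgG hx.1
    have hApos : 0 < volume A := hSgpos δ' hδ'pos
    have hN := popa_steinhaus ρ hρ A hAmeas hAG hApos
    have hsmall : ∀ w ∈ Sg, |w| < δ' → |S w| < η := by
      intro w hw hwδ
      have := hδ' hw (by simpa [Real.dist_eq] using hwδ)
      simpa [Real.dist_eq] using this
    -- key estimates for Popa quotients of elements of A
    have hup : ∀ u ∈ A, ∀ v ∈ A,
        0 < 1 + ρ * (u + -v / (1 + ρ * v) + ρ * u * (-v / (1 + ρ * v))) ∧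
        S (u + -v / (1 + ρ * v) + ρ * u * (-v / (1 + ρ * v))) ≤ 3 * η := by
      intro u hu v hv
      have hu1 : 0 < 1 + ρ * u := hAG u hu
      have hv1 : 0 < 1 + ρ * v := hAG v hv
      have hv0 : 0 < v := hv.2.1
      have hw : -v / (1 + ρ * v) ∈ Sg := hSgsym v hv.1
      have hw1 : 0 < 1 + ρ * (-v / (1 + ρ * v)) := hSgG hw
      have h1le : (1 : ℝ) ≤ 1 + ρ * v := by nlinarith
      have hwabs : |(-v / (1 + ρ * v))| < δ' := by
        rw [abs_div, abs_neg, abs_of_pos hv0, abs_of_pos hv1]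
        exact (div_le_self hv0.le h1le).trans_lt hv.2.2
      have huabs : |u| < δ' := by
        rw [abs_of_pos hu.2.1]; exact hu.2.2
      have hSu : |S u| < η := hsmall u hu.1 huabs
      have hSw : |S (-v / (1 + ρ * v))| < η := hsmall _ hw hwabs
      constructor
      · have heq : 1 + ρ * (u + -v / (1 + ρ * v) + ρ * u * (-v / (1 + ρ * v)))
            = (1 + ρ * u) * (1 + ρ * (-v / (1 + ρ * v))) := by ring
        rw [heq]; positivity
      · have hs := hsub u (-v / (1 + ρ * v)) hu1 hw1
        have habs : |S u * S (-v / (1 + ρ * v))| ≤ η * η := by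
          rw [abs_mul]
          exact mul_le_mul hSu.le hSw.le (abs_nonneg _) hηpos.le
        have h1 := abs_lt.1 hSu
        have h2 := abs_lt.1 hSw
        have h3 := (le_abs_self (S u * S (-v / (1 + ρ * v)))).trans habs
        nlinarith
    filter_upwards [hN] with x hx
    obtain ⟨u, hu, v, hv, rfl⟩ := hx
    obtain ⟨hx1, hxup⟩ := hup u hu v hv
    obtain ⟨hy1, hyup⟩ := hup v hv u hu
    set a := u + -v / (1 + ρ * v) + ρ * u * (-v / (1 + ρ * v)) with ha
    set b := v + -u / (1 + ρ * u) + ρ * v * (-u / (1 + ρ * u)) with hb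
    have hu1 : 0 < 1 + ρ * u := hAG u hu
    have hv1 : 0 < 1 + ρ * v := hAG v hv
    have hab : a + b + ρ * a * b = 0 := by
      rw [ha, hb]
      field_simp [mul_comm u ρ ▸ hu1.ne', mul_comm v ρ ▸ hv1.ne']
      ring
    have hkey := hsub a b hx1 hy1
    rw [hab, hS0] at hkey
    have hc : 0 < 1 + σ * S b := hmap b hy1
    rw [Real.dist_eq, sub_zero, abs_lt]
    constructor
    · rcases le_or_gt 0 (S a) with h | h
      · linarith
      · rcases le_or_gt (S b) 0 with h2 | h2
        · nlinarith
        · have hc1 : (1 : ℝ) ≤ 1 + σ * S b := by nlinarith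
          nlinarith
    · linarith
  -- Step 2: continuity at every point of `G_ρ`
  have hat : ∀ x : ℝ, 0 < 1 + ρ * x → Tendsto S (𝓝 x) (𝓝 (S x)) := by
    intro x hx
    have hxne : (1 : ℝ) + ρ * x ≠ 0 := hx.ne'
    set t : ℝ → ℝ := fun y => (y - x) / (1 + ρ * x) with htdef
    have htc : Tendsto t (𝓝 x) (𝓝 0) := by
      have h1 : Continuous t := (continuous_id.sub continuous_const).div_const _
      have h2 : t x = 0 := by simp [htdef]
      have h3 := h1.continuousAt (x := x)
      rwa [ContinuousAt, h2] at h3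
    set g : ℝ → ℝ := fun s => -s / (1 + ρ * s) with hgdef
    have hg0 : Tendsto g (𝓝 0) (𝓝 0) := by
      have h1 : ContinuousAt g 0 := by
        apply ContinuousAt.div (by fun_prop) (by fun_prop)
        norm_num
      have h2 : g 0 = 0 := by simp [hgdef]
      rwa [ContinuousAt, h2] at h1
    have hgt : Tendsto (fun y => g (t y)) (𝓝 x) (𝓝 0) := hg0.comp htc
    have hSt : Tendsto (fun y => S (t y)) (𝓝 x) (𝓝 0) := hcont0.comp htc
    have hSw : Tendsto (fun y => S (g (t y))) (𝓝 x) (𝓝 0) := hcont0.comp hgt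
    have hupper : Tendsto (fun y => S x + S (t y) + σ * S x * S (t y)) (𝓝 x) (𝓝 (S x)) := by
      have h1 : Tendsto (fun y => S x + S (t y)) (𝓝 x) (𝓝 (S x + 0)) :=
        (tendsto_const_nhds (x := S x)).add hSt
      have h2 : Tendsto (fun y => σ * S x * S (t y)) (𝓝 x) (𝓝 (σ * S x * 0)) :=
        (tendsto_const_nhds (x := σ * S x)).mul hSt
      simpa using h1.add h2
    have hlower : Tendsto (fun y => (S x - S (g (t y))) / (1 + σ * S (g (t y))))
        (𝓝 x) (𝓝 (S x)) := by
      have hd : Tendsto (fun y => 1 + σ * S (g (t y))) (𝓝 x) (𝓝 1) := by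
        simpa using (tendsto_const_nhds (x := (1:ℝ))).add
          ((tendsto_const_nhds (x := σ)).mul hSw)
      have := ((tendsto_const_nhds (x := S x)).sub hSw).div hd one_ne_zero
      simpa [Pi.div_def] using this
    have hev : ∀ᶠ y in 𝓝 x, 0 < 1 + ρ * t y := by
      have hm : {s : ℝ | 0 < 1 + ρ * s} ∈ 𝓝 (0 : ℝ) :=
        (isOpen_lt continuous_const (by fun_prop)).mem_nhds (by norm_num)
      exact htc hm
    refine tendsto_of_tendsto_of_tendsto_of_le_of_le' hlower hupper ?_ ?_
    · filter_upwards [hev] with y hy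
      set s := t y with hsdef
      have hxy : x + s + ρ * x * s = y := by
        simp only [hsdef, htdef]; field_simp [mul_comm x ρ ▸ hxne]; ring
      have h1 : 0 < 1 + ρ * y := by
        rw [← hxy]; nlinarith
      have hw1 : 0 < 1 + ρ * g s := by
        have heq : 1 + ρ * g s = 1 / (1 + ρ * s) := by
          rw [hgdef]; field_simp; ring
        rw [heq]; positivity
      have hgoal : y + g s + ρ * y * g s = x := by
        rw [← hxy]
        simp only [hgdef]
        field_simp [mul_comm s ρ ▸ hy.ne']
        ring
      have hs2 := hsub y (g s) h1 hw1
      rw [hgoal] at hs2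
      have hc : 0 < 1 + σ * S (g s) := hmap _ hw1
      rw [div_le_iff₀ hc]
      nlinarith
    · filter_upwards [hev] with y hy
      have hxy : x + t y + ρ * x * t y = y := by
        simp only [htdef]; field_simp [mul_comm x ρ ▸ hxne]; ring
      have hs := hsub x (t y) hx hy
      rw [hxy] at hs
      exact hs
  constructor
  · rw [ContinuousAt, hS0]
    exact hcont0
  · intro x hx
    exact hat x hx
end

section
/- Let ρ ≥ 0 and let A be a dense subgroup of the Popa group (G_ρ, ∘_ρ). Let g : A → ℝ with g(0) = 1 and K : A → ℝ, not identically 0, satisfy K(u ∘_ρ v) = g(v)·K(u) + K(v) for all u, v ∈ A. Then: (i) the set A_g := {u ∈ A : g(u) = 1} is a subgroup of (G_ρ, ∘_ρ), and K is additive on A_g, i.e. K(u ∘_ρ v) = K(u) + K(v) for u, v ∈ A_g; (ii) if A_g ≠ A, then there is a constant κ ≠ 0 such that K(t) = κ·(g(t) − 1) for all t ∈ A, and g is multiplicative: g(u ∘_ρ v) = g(u)·g(v) for all u, v ∈ A. -/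
/-- **Proposition 6.** Let `ρ ≥ 0`, let `A` be a dense subgroup
of the Popa group `(G_ρ, ∘_ρ)` (where `u ∘_ρ v = u + v + ρ*u*v`, identity `0`,
inverse `u ↦ -u/(1+ρ·u)`), let `g, K : A → ℝ` with `g(0) = 1`, `K` not
identically `0` on `A`, satisfy `K(u ∘_ρ v) = g(v)·K(u) + K(v)` on `A`. Then
(i) `A_g := {u ∈ A | g(u) = 1}` is a subgroup on which `K` is additive, and
(ii) if `A_g ≠ A` there is `κ ≠ 0` with `K(t) = κ·(g(t) - 1)` on `A` and `g`
multiplicative on `A`. -/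
theorem goldie_equation_dichotomy (ρ : ℝ) (hρ : 0 ≤ ρ)
    (A : Set ℝ) (hAG : A ⊆ {x : ℝ | 0 < 1 + ρ * x})
    (hA0 : (0 : ℝ) ∈ A)
    (hAop : ∀ u ∈ A, ∀ v ∈ A, u + v + ρ * u * v ∈ A)
    (hAinv : ∀ u ∈ A, -u / (1 + ρ * u) ∈ A)
    (hAdense : ∀ x : ℝ, 0 < 1 + ρ * x → x ∈ closure A)
    (g K : ℝ → ℝ) (hg0 : g 0 = 1)
    (hKne : ∃ u ∈ A, K u ≠ 0)
    (heq : ∀ u ∈ A, ∀ v ∈ A, K (u + v + ρ * u * v) = g v * K u + K v) :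
    ((0 : ℝ) ∈ {u ∈ A | g u = 1} ∧
     (∀ u ∈ {u ∈ A | g u = 1}, ∀ v ∈ {u ∈ A | g u = 1},
        u + v + ρ * u * v ∈ {u ∈ A | g u = 1}) ∧
     (∀ u ∈ {u ∈ A | g u = 1}, -u / (1 + ρ * u) ∈ {u ∈ A | g u = 1}) ∧
     (∀ u ∈ {u ∈ A | g u = 1}, ∀ v ∈ {u ∈ A | g u = 1},
        K (u + v + ρ * u * v) = K u + K v)) ∧
    ({u ∈ A | g u = 1} ≠ A →
      ∃ κ : ℝ, κ ≠ 0 ∧ (∀ t ∈ A, K t = κ * (g t - 1)) ∧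
        ∀ u ∈ A, ∀ v ∈ A, g (u + v + ρ * u * v) = g u * g v) := by

  obtain ⟨w, hw, hKw⟩ := hKne
  -- g is multiplicative on A (from associativity)
  have gmul : ∀ u ∈ A, ∀ v ∈ A, g (u + v + ρ * u * v) = g u * g v := by
    intro u hu v hv
    have h1 := heq w hw (u + v + ρ*u*v) (hAop u hu v hv)
    have h2 := heq (w + u + ρ*w*u) (hAop w hw u hu) v hv
    have h3 := heq w hw u hu
    have h4 := heq u hu v hv
    have e : w + (u + v + ρ*u*v) + ρ*w*(u+v+ρ*u*v)
        = (w + u + ρ*w*u) + v + ρ*(w+u+ρ*w*u)*v := by ring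
    rw [e] at h1
    have key : g (u + v + ρ*u*v) * K w = (g u * g v) * K w := by
      have h5 := h1.symm.trans h2
      linear_combination h5 + g v * h3 - h4
    exact mul_right_cancel₀ hKw key
  have hginv : ∀ u ∈ A, g u = 1 → g (-u / (1 + ρ * u)) = 1 := by
    intro u hu hgu
    have hpos : (0:ℝ) < 1 + ρ * u := hAG hu
    have hne : (1 + ρ * u) ≠ 0 := ne_of_gt hpos
    have h := gmul u hu (-u / (1 + ρ * u)) (hAinv u hu)
    have e : u + (-u / (1 + ρ * u)) + ρ * u * (-u / (1 + ρ * u)) = 0 := by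
      have e2 : u + (-u / (1 + ρ * u)) + ρ * u * (-u / (1 + ρ * u))
          = u - u * (1 + ρ * u) / (1 + ρ * u) := by ring
      rw [e2, mul_div_cancel_right₀ _ hne, sub_self]
    rw [e, hg0, hgu, one_mul] at h
    exact h.symm
  constructor
  · refine ⟨⟨hA0, hg0⟩, ?_, ?_, ?_⟩
    · rintro u ⟨hu, hgu⟩ v ⟨hv, hgv⟩
      exact ⟨hAop u hu v hv, by rw [gmul u hu v hv, hgu, hgv, one_mul]⟩
    · rintro u ⟨hu, hgu⟩
      exact ⟨hAinv u hu, hginv u hu hgu⟩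
    · rintro u ⟨hu, hgu⟩ v ⟨hv, hgv⟩
      rw [heq u hu v hv, hgv, one_mul]
  · intro hne
    -- there is t0 ∈ A with g t0 ≠ 1
    have : ∃ t0 ∈ A, g t0 ≠ 1 := by
      by_contra h
      push_neg at h
      exact hne (Set.ext fun x => ⟨fun hx => hx.1, fun hx => ⟨hx, h x hx⟩⟩)
    obtain ⟨t0, ht0, hgt0⟩ := this
    have hgt0' : g t0 - 1 ≠ 0 := sub_ne_zero.mpr hgt0
    refine ⟨K t0 / (g t0 - 1), ?_, ?_, gmul⟩
    case refine_2 =>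
      intro t ht
      have h1 := heq t ht t0 ht0
      have h2 := heq t0 ht0 t ht
      have e : t + t0 + ρ*t*t0 = t0 + t + ρ*t0*t := by ring
      rw [e] at h1
      have key : (g t0 - 1) * K t = (g t - 1) * K t0 := by
        linear_combination h2 - h1
      field_simp
      linear_combination key
    case refine_1 =>
      intro h0
      have h1 := heq w hw t0 ht0
      have h2 := heq t0 ht0 w hw
      have e : w + t0 + ρ*w*t0 = t0 + w + ρ*t0*w := by ring
      rw [e] at h1
      have key : (g t0 - 1) * K w = (g w - 1) * K t0 := by
        linear_combination h2 - h1
      have hKt0 : K t0 = 0 := by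
        have := div_eq_zero_iff.mp h0
        rcases this with h | h
        · exact h
        · exact absurd h hgt0'
      rw [hKt0, mul_zero] at key
      exact hKw (by
        have := mul_eq_zero.mp key
        rcases this with h | h
        · exact absurd h hgt0'
        · exact h)
end
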